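/- arXiv:1204.2980 — 5 statements merged into one kernel-verified Lean document; each statement's English description precedes it below -/
import Mathlib

section
/- Let X_0,...,X_n and Y_0,...,Y_n be random variables on a common probability space with values in Polish spaces. If the regular conditional distribution of Y^n given X^n factorizes causally, i.e. P_{Y^n|X^n}(dy^n|x^n) = ⊗_{i=0}^n P_{Y_i|Y^{i-1},X^i}(dy_i|y^{i-1},x^i) for P_{X^n}-almost all x^n, then for each i = 0,1,...,n-1 the Markov chain Y_i ↔ (X^i, Y^{i-1}) ↔ (X_{i+1}, X_{i+2}, ..., X_n) holds, i.e. Y_i is conditionally independent of (X_{i+1},...,X_n) given (X^i, Y^{i-1}). -/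
open MeasureTheory ProbabilityTheory
open scoped ENNReal

/-- The causal `(m)`-fold product measure on `Π j : Fin m, 𝒴 j` built from the stage
conditional kernels `κ i` of `Y_i` given `(Y^{i-1}, X^i)`, evaluated along the source
sequence `x`.  This is `⊗_{i=0}^{m-1} P_{Y_i | Y^{i-1}, X^i}(dy_i | y^{i-1}, x^i)`. -/
noncomputable def causalProd {𝒳 𝒴 : ℕ → Type*} [∀ i, MeasurableSpace (𝒳 i)]
    [∀ i, MeasurableSpace (𝒴 i)]
    (κ : (i : ℕ) → Kernel ((Π j : Fin i, 𝒴 j) × (Π j : Fin (i + 1), 𝒳 j)) (𝒴 i)) :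
    (m : ℕ) → (Π j : Fin m, 𝒳 j) → Measure (Π j : Fin m, 𝒴 j)
  | 0, _ => Measure.dirac (fun j => j.elim0)
  | (m + 1), x =>
      (causalProd κ m (fun j => x j.castSucc)).bind
        (fun y => (κ m (y, x)).map (fun z => (Fin.snoc y z : Π j : Fin (m + 1), 𝒴 j)))

section Aux

variable {𝒳 𝒴 : ℕ → Type*} [∀ i, MeasurableSpace (𝒳 i)] [∀ i, MeasurableSpace (𝒴 i)]
  {κ : (i : ℕ) → Kernel ((Π j : Fin i, 𝒴 j) × (Π j : Fin (i + 1), 𝒳 j)) (𝒴 i)}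

lemma measurable_snoc_pair {m : ℕ} :
    Measurable (fun p : (Π j : Fin m, 𝒴 j) × 𝒴 m =>
      (Fin.snoc p.1 p.2 : Π j : Fin (m + 1), 𝒴 j)) := by
  apply measurable_pi_lambda
  intro j
  induction j using Fin.lastCases with
  | last => simp only [Fin.snoc_last]; exact measurable_snd
  | cast j => simp only [Fin.snoc_castSucc]; exact (measurable_pi_apply j).comp measurable_fst

lemma measurable_snoc_right {m : ℕ} (y : Π j : Fin m, 𝒴 j) :
    Measurable (fun z : 𝒴 m => (Fin.snoc y z : Π j : Fin (m + 1), 𝒴 j)) :=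
  measurable_snoc_pair.comp measurable_prodMk_left

variable [∀ i, IsMarkovKernel (κ i)]

lemma measurable_bindFam (m : ℕ) (x : Π j : Fin (m + 1), 𝒳 j) :
    Measurable (fun y : Π j : Fin m, 𝒴 j =>
      ((κ m (y, x)).map (fun z => (Fin.snoc y z : Π j : Fin (m + 1), 𝒴 j)))) := by
  apply Measure.measurable_of_measurable_coe
  intro s hs
  have h1 : ∀ y : Π j : Fin m, 𝒴 j,
      ((κ m (y, x)).map (fun z => (Fin.snoc y z : Π j : Fin (m + 1), 𝒴 j))) s
        = ∫⁻ z, s.indicator (fun _ => (1 : ℝ≥0∞)) (Fin.snoc y z) ∂κ m (y, x) := by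
    intro y
    refine (Measure.map_apply (measurable_snoc_right y) hs).trans ?_
    rw [← lintegral_indicator_one ((measurable_snoc_right y) hs)]
    refine lintegral_congr fun z => ?_
    by_cases hz : z ∈ (fun z : 𝒴 m => (Fin.snoc y z : Π j : Fin (m + 1), 𝒴 j)) ⁻¹' s
    · rw [Set.indicator_of_mem hz, Set.indicator_of_mem (Set.mem_preimage.mp hz)]
      rfl
    · rw [Set.indicator_of_notMem hz,
        Set.indicator_of_notMem (fun hmem => hz (Set.mem_preimage.mpr hmem))]
  simp_rw [h1]
  exact Measurable.lintegral_kernel_prod_right'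
    (κ := (κ m).comap (fun y : Π j : Fin m, 𝒴 j => (y, x)) (measurable_id.prodMk measurable_const))
    ((measurable_const.indicator hs).comp measurable_snoc_pair)

lemma isProbabilityMeasure_causalProd : ∀ (m : ℕ) (x : Π j : Fin m, 𝒳 j),
    IsProbabilityMeasure (causalProd κ m x)
  | 0, x => by
      rw [show causalProd κ 0 x = Measure.dirac (fun j : Fin 0 => j.elim0) from rfl]
      infer_instance
  | (m + 1), x => by
      have IH := isProbabilityMeasure_causalProd m (fun j => x j.castSucc)
      constructor
      rw [show causalProd κ (m + 1) x
          = (causalProd κ m (fun j => x j.castSucc)).bind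
              (fun y => (κ m (y, x)).map
                (fun z => (Fin.snoc y z : Π j : Fin (m + 1), 𝒴 j))) from rfl,
        Measure.bind_apply MeasurableSet.univ (measurable_bindFam m x).aemeasurable]
      have h1 : ∀ y : Π j : Fin m, 𝒴 j,
          ((κ m (y, x)).map (fun z => (Fin.snoc y z : Π j : Fin (m + 1), 𝒴 j))) Set.univ
            = 1 := by
        intro y
        have : IsProbabilityMeasure
            ((κ m (y, x)).map (fun z => (Fin.snoc y z : Π j : Fin (m + 1), 𝒴 j))) :=
          Measure.isProbabilityMeasure_map (measurable_snoc_pair.comp measurable_prodMk_left).aemeasurable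
        exact measure_univ
      simp_rw [h1]
      rw [lintegral_one, measure_univ]

lemma causalProd_map_castLE : ∀ (M m : ℕ) (h : m ≤ M) (x : Π j : Fin M, 𝒳 j),
    (causalProd κ M x).map (fun (y : Π j : Fin M, 𝒴 j) (j : Fin m) => y (Fin.castLE h j))
      = causalProd κ m (fun j => x (Fin.castLE h j)) := by
  intro M
  induction M with
  | zero =>
      intro m h x
      obtain rfl : m = 0 := Nat.le_zero.mp h
      have h2 : (fun (y : Π j : Fin 0, 𝒴 j) (j : Fin 0) => y (Fin.castLE h j)) = id := by
        funext y j
        exact j.elim0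
      rw [h2, Measure.map_id]
      rfl
  | succ M ih =>
      intro m h x
      rcases eq_or_lt_of_le h with rfl | h'
      · rw [show (fun (y : Π j : Fin (M + 1), 𝒴 j) (j : Fin (M + 1)) => y (Fin.castLE h j))
            = id from rfl, Measure.map_id]
        rfl
      · have hm : m ≤ M := Nat.lt_succ_iff.mp h'
        have hr : Measurable (fun (y : Π j : Fin (M + 1), 𝒴 j) (j : Fin m) =>
            y (Fin.castLE h j)) := measurable_pi_lambda _ fun j => measurable_pi_apply _
        have hr' : Measurable (fun (y : Π j : Fin M, 𝒴 j) (j : Fin m) =>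
            y (Fin.castLE hm j)) := measurable_pi_lambda _ fun j => measurable_pi_apply _
        haveI := isProbabilityMeasure_causalProd (κ := κ) M (fun j => x j.castSucc)
        ext s hs
        rw [Measure.map_apply hr hs,
          show causalProd κ (M + 1) x
            = (causalProd κ M (fun j => x j.castSucc)).bind
                (fun y => (κ M (y, x)).map
                  (fun z => (Fin.snoc y z : Π j : Fin (M + 1), 𝒴 j))) from rfl,
          Measure.bind_apply (hr hs) (measurable_bindFam M x).aemeasurable]
        have hint : ∀ y : Π j : Fin M, 𝒴 j,
            ((κ M (y, x)).map (fun z => (Fin.snoc y z : Π j : Fin (M + 1), 𝒴 j)))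
                ((fun (y : Π j : Fin (M + 1), 𝒴 j) (j : Fin m) => y (Fin.castLE h j)) ⁻¹' s)
              = Set.indicator
                  ((fun (y : Π j : Fin M, 𝒴 j) (j : Fin m) => y (Fin.castLE hm j)) ⁻¹' s)
                  (fun _ => (1 : ℝ≥0∞)) y := by
          intro y
          refine (Measure.map_apply (measurable_snoc_right y) (hr hs)).trans ?_
          rw [Set.preimage_preimage]
          have hconst : (fun z : 𝒴 M =>
              (fun j : Fin m => (Fin.snoc y z : Π j : Fin (M + 1), 𝒴 j) (Fin.castLE h j)))
              = fun _ => (fun j : Fin m => y (Fin.castLE hm j)) := by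
            funext z
            funext j
            exact Fin.snoc_castSucc (α := fun j : Fin (M + 1) => 𝒴 ↑j) z y (Fin.castLE hm j)
          rw [hconst]
          by_cases hy : y ∈ (fun (y : Π j : Fin M, 𝒴 j) (j : Fin m) => y (Fin.castLE hm j)) ⁻¹' s
          · rw [Set.preimage_const_of_mem (Set.mem_preimage.mp hy), measure_univ,
              Set.indicator_of_mem hy]
          · rw [Set.preimage_const_of_notMem (fun hmem => hy (Set.mem_preimage.mpr hmem)),
              measure_empty, Set.indicator_of_notMem hy]
        rw [lintegral_congr hint, lintegral_indicator (hr' hs), setLIntegral_one,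
          ← Measure.map_apply hr' hs, ih m hm (fun j => x j.castSucc)]
        rfl

lemma causalProd_set_eq (M m : ℕ) (h1 : m + 1 ≤ M) (x : Π j : Fin M, 𝒳 j)
    {C : Set (Π j : Fin m, 𝒴 j)} (hC : MeasurableSet C) {A : Set (𝒴 m)} (hA : MeasurableSet A) :
    causalProd κ M x
      {y | (fun j : Fin m => y (Fin.castLE (le_trans (Nat.le_succ m) h1) j)) ∈ C
          ∧ y ⟨m, h1⟩ ∈ A}
    = ∫⁻ y, C.indicator (fun _ => (1 : ℝ≥0∞))
          (fun j : Fin m => y (Fin.castLE (le_trans (Nat.le_succ m) h1) j))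
        * κ m ((fun j : Fin m => y (Fin.castLE (le_trans (Nat.le_succ m) h1) j)),
            (fun j : Fin (m + 1) => x (Fin.castLE h1 j))) A
        ∂ causalProd κ M x := by
  have hm : m ≤ M := le_trans (Nat.le_succ m) h1
  set G' : Set (Π j : Fin (m + 1), 𝒴 j) :=
    {y | (fun j : Fin m => y j.castSucc) ∈ C ∧ y (Fin.last m) ∈ A} with hG'def
  have hG' : MeasurableSet G' := by
    exact MeasurableSet.inter
      ((measurable_pi_lambda _ fun j => measurable_pi_apply _) hC)
      ((measurable_pi_apply _) hA)
  have hr1 : Measurable (fun (y : Π j : Fin M, 𝒴 j) (j : Fin (m + 1)) =>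
      y (Fin.castLE h1 j)) := measurable_pi_lambda _ fun j => measurable_pi_apply _
  have hr : Measurable (fun (y : Π j : Fin M, 𝒴 j) (j : Fin m) =>
      y (Fin.castLE hm j)) := measurable_pi_lambda _ fun j => measurable_pi_apply _
  have hg0 : Measurable (fun y' : Π j : Fin m, 𝒴 j =>
      C.indicator (fun _ => (1 : ℝ≥0∞)) y'
        * κ m (y', (fun j : Fin (m + 1) => x (Fin.castLE h1 j))) A) :=
    (measurable_const.indicator hC).mul
      ((Kernel.measurable_coe _ hA).comp (measurable_id.prodMk measurable_const))
  haveI := isProbabilityMeasure_causalProd (κ := κ) m (fun j => x (Fin.castLE hm j))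
  calc (causalProd κ M x
        {y | (fun j : Fin m => y (Fin.castLE hm j)) ∈ C ∧ y ⟨m, h1⟩ ∈ A})
      = (causalProd κ M x).map
          (fun (y : Π j : Fin M, 𝒴 j) (j : Fin (m + 1)) => y (Fin.castLE h1 j)) G' :=
        (Measure.map_apply hr1 hG').symm
    _ = causalProd κ (m + 1) (fun j : Fin (m + 1) => x (Fin.castLE h1 j)) G' := by
        rw [causalProd_map_castLE M (m + 1) h1 x]
    _ = ∫⁻ y, ((κ m (y, (fun j : Fin (m + 1) => x (Fin.castLE h1 j)))).map
          (fun z => (Fin.snoc y z : Π j : Fin (m + 1), 𝒴 j))) G'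
          ∂ causalProd κ m (fun j : Fin m => x (Fin.castLE hm j)) := by
        rw [show causalProd κ (m + 1) (fun j : Fin (m + 1) => x (Fin.castLE h1 j))
          = (causalProd κ m (fun j : Fin m =>
              (fun j' : Fin (m + 1) => x (Fin.castLE h1 j')) j.castSucc)).bind
              (fun y => (κ m (y, (fun j : Fin (m + 1) => x (Fin.castLE h1 j)))).map
                (fun z => (Fin.snoc y z : Π j : Fin (m + 1), 𝒴 j))) from rfl,
          Measure.bind_apply hG' (measurable_bindFam m _).aemeasurable]
        rfl
    _ = ∫⁻ y, C.indicator (fun _ => (1 : ℝ≥0∞)) y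
          * κ m (y, (fun j : Fin (m + 1) => x (Fin.castLE h1 j))) A
          ∂ causalProd κ m (fun j : Fin m => x (Fin.castLE hm j)) := by
        apply lintegral_congr
        intro y
        refine (Measure.map_apply (measurable_snoc_right y) hG').trans ?_
        have hpre : ∀ z : 𝒴 m,
            ((Fin.snoc y z : Π j : Fin (m + 1), 𝒴 j) ∈ G') ↔ (y ∈ C ∧ z ∈ A) := by
          intro z
          have h2 : (fun j : Fin m => (Fin.snoc y z : Π j : Fin (m + 1), 𝒴 j) j.castSucc)
              = y := funext fun j => Fin.snoc_castSucc (α := fun j : Fin (m + 1) => 𝒴 ↑j) z y j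
          simp only [hG'def, Set.mem_setOf_eq, h2, Fin.snoc_last]
        by_cases hy : y ∈ C
        · have : (fun z : 𝒴 m => (Fin.snoc y z : Π j : Fin (m + 1), 𝒴 j)) ⁻¹' G' = A := by
            ext z; simp [Set.mem_preimage, hpre z, hy]
          rw [this, Set.indicator_of_mem hy, one_mul]
        · have : (fun z : 𝒴 m => (Fin.snoc y z : Π j : Fin (m + 1), 𝒴 j)) ⁻¹' G' = ∅ := by
            ext z; simp [Set.mem_preimage, hpre z, hy]
          rw [this, measure_empty, Set.indicator_of_notMem hy, zero_mul]
    _ = ∫⁻ y, C.indicator (fun _ => (1 : ℝ≥0∞)) (fun j : Fin m => y (Fin.castLE hm j))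
          * κ m ((fun j : Fin m => y (Fin.castLE hm j)),
              (fun j : Fin (m + 1) => x (Fin.castLE h1 j))) A
          ∂ causalProd κ M x := by
        rw [← causalProd_map_castLE M m hm x, lintegral_map hg0 hr]

end Aux

/-- If the regular conditional distribution of `Y^n` given `X^n` factorizes
causally, i.e. `P_{Y^n|X^n}(dy^n|x^n) = ⊗_{i=0}^n P_{Y_i|Y^{i-1},X^i}(dy_i|y^{i-1},x^i)`
for `P_{X^n}`-almost all `x^n`, then for each `i < n`, `Y_i` is conditionally independent of
`(X_{i+1}, …, X_n)` given `(X^i, Y^{i-1})`. -/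
theorem stmt0
    {Ω : Type*} [MeasurableSpace Ω] [StandardBorelSpace Ω] [Nonempty Ω]
    (μ : Measure Ω) [IsProbabilityMeasure μ]
    {𝒳 𝒴 : ℕ → Type*}
    [∀ i, MeasurableSpace (𝒳 i)] [∀ i, TopologicalSpace (𝒳 i)]
    [∀ i, PolishSpace (𝒳 i)] [∀ i, BorelSpace (𝒳 i)]
    [∀ i, MeasurableSpace (𝒴 i)] [∀ i, TopologicalSpace (𝒴 i)]
    [∀ i, PolishSpace (𝒴 i)] [∀ i, BorelSpace (𝒴 i)] [∀ i, Nonempty (𝒴 i)]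
    (n : ℕ) (X : (i : ℕ) → Ω → 𝒳 i) (Y : (i : ℕ) → Ω → 𝒴 i)
    (hX : ∀ i, Measurable (X i)) (hY : ∀ i, Measurable (Y i))
    -- causal factorization of the regular conditional distribution of `Y^n` given `X^n`:
    (hfact : ∀ᵐ x ∂(μ.map (fun ω (j : Fin (n + 1)) => X j ω)),
      condDistrib (fun ω (j : Fin (n + 1)) => Y j ω) (fun ω (j : Fin (n + 1)) => X j ω) μ x
        = causalProd
            (fun i => condDistrib (Y i)
              (fun ω => ((fun j : Fin i => Y j ω), (fun j : Fin (i + 1) => X j ω))) μ)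
            (n + 1) x) :
    -- conclusion: `Y_i ↔ (X^i, Y^{i-1}) ↔ (X_{i+1}, …, X_n)` for every `i < n`
    ∀ i < n,
      CondIndepFun
        (MeasurableSpace.comap
          (fun ω => ((fun j : Fin i => Y j ω), (fun j : Fin (i + 1) => X j ω))) inferInstance)
        (((measurable_pi_lambda _ fun j : Fin i => hY j).prodMk
          (measurable_pi_lambda _ fun j : Fin (i + 1) => hX j)).comap_le)
        (Y i) (fun ω (j : Fin (n - i)) => X (i + 1 + j) ω) μ := by
  intro i hi
  have hi1n : i + 1 ≤ n + 1 := by omega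
  have hin : i ≤ n + 1 := le_trans (Nat.le_succ i) hi1n
  set κf := (fun m => condDistrib (Y m)
      (fun ω => ((fun j : Fin m => Y j ω), (fun j : Fin (m + 1) => X j ω))) μ) with hκf
  set XX : Ω → Π j : Fin (n + 1), 𝒳 j := fun ω (j : Fin (n + 1)) => X j ω with hXXdef
  set Yn : Ω → Π j : Fin (n + 1), 𝒴 j := fun ω (j : Fin (n + 1)) => Y j ω with hYndef
  set Z : Ω → (Π j : Fin i, 𝒴 j) × (Π j : Fin (i + 1), 𝒳 j) :=
    fun ω => ((fun j : Fin i => Y j ω), (fun j : Fin (i + 1) => X j ω)) with hZdef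
  set W : Ω → Π j : Fin (n - i), 𝒳 (i + 1 + j) :=
    fun ω (j : Fin (n - i)) => X (i + 1 + j) ω with hWdef
  set T : Ω → (Π j : Fin i, 𝒴 j) × (Π j : Fin (n + 1), 𝒳 j) :=
    fun ω => ((fun j : Fin i => Y j ω), (fun j : Fin (n + 1) => X j ω)) with hTdef
  set ψ : (Π j : Fin i, 𝒴 j) × (Π j : Fin (n + 1), 𝒳 j) →
      (Π j : Fin i, 𝒴 j) × (Π j : Fin (i + 1), 𝒳 j) :=
    fun p => (p.1, fun j : Fin (i + 1) => p.2 (Fin.castLE hi1n j)) with hψdef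
  have hXXm : Measurable XX := measurable_pi_lambda _ fun j => hX _
  have hYnm : Measurable Yn := measurable_pi_lambda _ fun j => hY _
  have hZm : Measurable Z :=
    (measurable_pi_lambda _ fun j => hY _).prodMk (measurable_pi_lambda _ fun j => hX _)
  have hWm : Measurable W := measurable_pi_lambda _ fun j => hX _
  have hTm : Measurable T :=
    (measurable_pi_lambda _ fun j => hY _).prodMk (measurable_pi_lambda _ fun j => hX _)
  have hψm : Measurable ψ :=
    measurable_fst.prodMk
      (measurable_pi_lambda _ fun j => (measurable_pi_apply _).comp measurable_snd)
  haveI : ∀ m, IsMarkovKernel (κf m) := fun m => by rw [hκf]; infer_instance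
  have hpair : Measurable (fun ω => (XX ω, Yn ω)) := hXXm.prodMk hYnm
  haveI : IsProbabilityMeasure (μ.map XX) := Measure.isProbabilityMeasure_map hXXm.aemeasurable
  haveI : IsProbabilityMeasure (μ.map (fun ω => (XX ω, Yn ω))) :=
    Measure.isProbabilityMeasure_map hpair.aemeasurable
  have hρ : μ.map (fun ω => (XX ω, Yn ω)) = (μ.map XX) ⊗ₘ condDistrib Yn XX μ := by
    rw [condDistrib_def, ← Measure.fst_map_prodMk₀ (X := XX) hYnm.aemeasurable]
    exact (Measure.disintegrate _ _).symm
  -- core identity on rectangles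
  have core : ∀ {C : Set (Π j : Fin i, 𝒴 j)}, MeasurableSet C →
      ∀ {D : Set (Π j : Fin (n + 1), 𝒳 j)}, MeasurableSet D →
      ∀ {A : Set (𝒴 i)}, MeasurableSet A →
      μ (T ⁻¹' (C ×ˢ D) ∩ (Y i) ⁻¹' A)
        = ∫⁻ ω in T ⁻¹' (C ×ˢ D), condDistrib (Y i) Z μ (Z ω) A ∂μ := by
    intro C hC D hD A hA
    set G : Set (Π j : Fin (n + 1), 𝒴 j) :=
      {y | (fun j : Fin i => y (Fin.castLE (le_trans (Nat.le_succ i) hi1n) j)) ∈ C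
          ∧ y ⟨i, hi1n⟩ ∈ A} with hGdef
    have hG : MeasurableSet G := by
      rw [hGdef]
      exact ((measurable_pi_lambda
          (fun (y : Π j : Fin (n + 1), 𝒴 j) (j : Fin i) =>
            y (Fin.castLE (le_trans (Nat.le_succ i) hi1n) j))
          (fun j => measurable_pi_apply _)) hC).inter
        ((measurable_pi_apply (⟨i, hi1n⟩ : Fin (n + 1))) hA)
    set rC : Set (Π j : Fin (n + 1), 𝒴 j) :=
      (fun (y : Π j : Fin (n + 1), 𝒴 j) (j : Fin i) =>
        y (Fin.castLE (le_trans (Nat.le_succ i) hi1n) j)) ⁻¹' C with hrCdef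
    have hrC : MeasurableSet rC :=
      (measurable_pi_lambda _ fun j => measurable_pi_apply _) hC
    set gf : (Π j : Fin (n + 1), 𝒳 j) → (Π j : Fin (n + 1), 𝒴 j) → ℝ≥0∞ :=
      fun x y => Set.indicator (D ×ˢ rC) (fun _ => (1 : ℝ≥0∞)) (x, y)
        * condDistrib (Y i) Z μ
            ((fun j : Fin i => y (Fin.castLE (le_trans (Nat.le_succ i) hi1n) j)),
             (fun j : Fin (i + 1) => x (Fin.castLE hi1n j))) A with hgfdef
    have hg2 : Measurable (fun p : (Π j : Fin (n + 1), 𝒳 j) × (Π j : Fin (n + 1), 𝒴 j) =>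
        gf p.1 p.2) := by
      apply Measurable.mul
      · exact measurable_const.indicator (hD.prod hrC)
      · exact (Kernel.measurable_coe _ hA).comp
          ((measurable_pi_lambda _ fun j => (measurable_pi_apply _).comp measurable_snd).prodMk
           (measurable_pi_lambda _ fun j => (measurable_pi_apply _).comp measurable_fst))
    have hset : T ⁻¹' (C ×ˢ D) ∩ (Y i) ⁻¹' A = (fun ω => (XX ω, Yn ω)) ⁻¹' (D ×ˢ G) := by
      ext ω
      constructor
      · rintro ⟨hCD, hA'⟩
        exact ⟨hCD.2, hCD.1, hA'⟩
      · rintro ⟨hD', hC', hA'⟩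
        exact ⟨⟨hC', hD'⟩, hA'⟩
    calc μ (T ⁻¹' (C ×ˢ D) ∩ (Y i) ⁻¹' A)
        = μ.map (fun ω => (XX ω, Yn ω)) (D ×ˢ G) := by
          rw [hset, Measure.map_apply hpair (hD.prod hG)]
      _ = ∫⁻ x, condDistrib Yn XX μ x (Prod.mk x ⁻¹' (D ×ˢ G)) ∂μ.map XX := by
          rw [hρ, Measure.compProd_apply (hD.prod hG)]
      _ = ∫⁻ x, ∫⁻ y, gf x y ∂condDistrib Yn XX μ x ∂μ.map XX := by
          refine lintegral_congr_ae ?_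
          filter_upwards [hfact] with x hx
          rw [hx]
          by_cases hxD : x ∈ D
          · rw [Set.mk_preimage_prod_right hxD]
            have hgy : ∀ y, gf x y
                = Set.indicator C (fun _ => (1 : ℝ≥0∞))
                    (fun j : Fin i => y (Fin.castLE (le_trans (Nat.le_succ i) hi1n) j))
                  * condDistrib (Y i) Z μ
                      ((fun j : Fin i => y (Fin.castLE (le_trans (Nat.le_succ i) hi1n) j)),
                       (fun j : Fin (i + 1) => x (Fin.castLE hi1n j))) A := by
              intro y
              by_cases hyC : y ∈ rC
              · simp only [hgfdef]
                rw [Set.indicator_of_mem (Set.mem_prod.mpr ⟨hxD, hyC⟩),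
                  Set.indicator_of_mem (Set.mem_preimage.mp hyC)]
              · simp only [hgfdef]
                rw [Set.indicator_of_notMem (fun hmem => hyC (Set.mem_prod.mp hmem).2),
                  Set.indicator_of_notMem (fun hmem => hyC (Set.mem_preimage.mpr hmem)),
                  zero_mul]
            rw [lintegral_congr hgy]
            exact causalProd_set_eq (n + 1) i hi1n x hC hA
          · rw [Set.mk_preimage_prod_right_eq_empty hxD]
            have hgy0 : ∀ y, gf x y = 0 := by
              intro y
              simp only [hgfdef]
              rw [Set.indicator_of_notMem (fun hmem => hxD (Set.mem_prod.mp hmem).1), zero_mul]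
            rw [lintegral_congr hgy0, lintegral_zero]
            exact measure_empty
      _ = ∫⁻ p, gf p.1 p.2 ∂μ.map (fun ω => (XX ω, Yn ω)) := by
          rw [hρ, Measure.lintegral_compProd hg2]
      _ = ∫⁻ ω, gf (XX ω) (Yn ω) ∂μ := lintegral_map hg2 hpair
      _ = ∫⁻ ω in T ⁻¹' (C ×ˢ D), condDistrib (Y i) Z μ (Z ω) A ∂μ := by
          rw [← lintegral_indicator (hTm (hC.prod hD))]
          refine lintegral_congr fun ω => ?_
          by_cases hω : ω ∈ T ⁻¹' (C ×ˢ D)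
          · have hmem2 : (XX ω, Yn ω) ∈ D ×ˢ rC := ⟨hω.2, hω.1⟩
            simp only [hgfdef]
            rw [Set.indicator_of_mem hmem2, Set.indicator_of_mem hω, one_mul]
            rfl
          · have hmem2 : (XX ω, Yn ω) ∉ D ×ˢ rC := fun hmem => hω ⟨hmem.2, hmem.1⟩
            simp only [hgfdef]
            rw [Set.indicator_of_notMem hmem2, Set.indicator_of_notMem hω, zero_mul]
  -- extend to all measurable sets E in the target space of T
  haveI : IsProbabilityMeasure (μ.map T) := Measure.isProbabilityMeasure_map hTm.aemeasurable
  have hcoreE : ∀ {A : Set (𝒴 i)}, MeasurableSet A →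
      ∀ {E : Set ((Π j : Fin i, 𝒴 j) × (Π j : Fin (n + 1), 𝒳 j))}, MeasurableSet E →
      μ (T ⁻¹' E ∩ (Y i) ⁻¹' A)
        = ∫⁻ ω in T ⁻¹' E, condDistrib (Y i) Z μ (Z ω) A ∂μ := by
    intro A hA E hE
    have hdens : Measurable (fun p : (Π j : Fin i, 𝒴 j) × (Π j : Fin (n + 1), 𝒳 j) =>
        condDistrib (Y i) Z μ (ψ p) A) := (Kernel.measurable_coe _ hA).comp hψm
    have hrect : ∀ (C : Set (Π j : Fin i, 𝒴 j)), MeasurableSet C →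
        ∀ (D : Set (Π j : Fin (n + 1), 𝒳 j)), MeasurableSet D →
        ((μ.restrict ((Y i) ⁻¹' A)).map T) (C ×ˢ D)
          = ((μ.map T).withDensity
              (fun p => condDistrib (Y i) Z μ (ψ p) A)) (C ×ˢ D) := by
      intro C hC D hD
      rw [Measure.map_apply hTm (hC.prod hD), Measure.restrict_apply (hTm (hC.prod hD)),
        withDensity_apply _ (hC.prod hD), setLIntegral_map (hC.prod hD) hdens hTm]
      rw [core hC hD hA]
      exact lintegral_congr fun ω => rfl
    have hext : (μ.restrict ((Y i) ⁻¹' A)).map T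
        = (μ.map T).withDensity (fun p => condDistrib (Y i) Z μ (ψ p) A) := by
      haveI h1 : IsFiniteMeasure ((μ.restrict ((Y i) ⁻¹' A)).map T) :=
        Measure.isFiniteMeasure_map _ _
      haveI h2 : IsFiniteMeasure
          ((μ.map T).withDensity (fun p => condDistrib (Y i) Z μ (ψ p) A)) := by
        constructor
        rw [withDensity_apply _ MeasurableSet.univ, Measure.restrict_univ]
        calc ∫⁻ p, condDistrib (Y i) Z μ (ψ p) A ∂μ.map T
            ≤ ∫⁻ _, 1 ∂μ.map T := lintegral_mono fun p => prob_le_one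
          _ < ⊤ := by rw [lintegral_one]; exact measure_lt_top _ _
      refine ext_of_generate_finite _ generateFrom_prod.symm isPiSystem_prod ?_ ?_
      · rintro _ ⟨C, hC, D, hD, rfl⟩
        exact hrect C hC D hD
      · rw [← Set.univ_prod_univ]
        exact hrect _ MeasurableSet.univ _ MeasurableSet.univ
    have h3 := congrArg (fun ν : Measure _ => ν E) hext
    rw [Measure.map_apply hTm hE, Measure.restrict_apply (hTm hE),
      withDensity_apply _ hE, setLIntegral_map hE hdens hTm] at h3
    rw [h3]
    exact lintegral_congr fun ω => rfl
  -- σ-algebra comparisons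
  have hm'T : (MeasurableSpace.comap Z inferInstance : MeasurableSpace Ω)
      ≤ MeasurableSpace.comap T inferInstance := by
    rintro s ⟨u, hu, rfl⟩
    exact ⟨ψ ⁻¹' u, hψm hu, rfl⟩
  -- step 1 : conditional expectation given T
  have hcond : ∀ {A : Set (𝒴 i)}, MeasurableSet A →
      (fun ω => (condDistrib (Y i) Z μ (Z ω) A).toReal)
        =ᵐ[μ] μ⟦(Y i) ⁻¹' A | MeasurableSpace.comap T inferInstance⟧ := by
    intro A hA
    refine ae_eq_condExp_of_forall_setIntegral_eq hTm.comap_le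
      ((integrable_const (1 : ℝ)).indicator (hY i hA))
      (fun s _ _ => (integrable_toReal_condDistrib hZm.aemeasurable hA).integrableOn)
      ?_ ?_
    · rintro s ⟨E, hE, rfl⟩ _
      rw [integral_toReal (((measurable_condDistrib hA).mono hZm.comap_le le_rfl).aemeasurable)
          (Filter.Eventually.of_forall fun ω => measure_lt_top _ _),
        integral_indicator_const _ (hY i hA), measureReal_restrict_apply (hY i hA),
        smul_eq_mul, mul_one, Set.inter_comm]
      exact congrArg ENNReal.toReal (hcoreE hA hE).symm
    · refine (Measurable.stronglyMeasurable ?_).aestronglyMeasurable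
      exact @Measurable.ennreal_toReal _ (MeasurableSpace.comap T inferInstance) _
        ((measurable_condDistrib hA).mono hm'T le_rfl)
  -- step 2 : conclude conditional independence
  haveI : SigmaFinite (μ.trim hTm.comap_le) := by infer_instance
  haveI : SigmaFinite (μ.trim hZm.comap_le) := by infer_instance
  refine (condIndepFun_iff _ hZm.comap_le (Y i) W (hY i) hWm μ).mpr ?_
  rintro t1 t2 ⟨A, hA, rfl⟩ ⟨B, hB, rfl⟩
  set h : Ω → ℝ := fun ω => (condDistrib (Y i) Z μ (Z ω) A).toReal with hhdef
  set F2 : Ω → ℝ := Set.indicator (W ⁻¹' B) (fun _ => (1 : ℝ)) with hF2def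
  set F1 : Ω → ℝ := Set.indicator ((Y i) ⁻¹' A) (fun _ => (1 : ℝ)) with hF1def
  have hφm : Measurable (fun (p : (Π j : Fin i, 𝒴 j) × (Π j : Fin (n + 1), 𝒳 j))
      (j : Fin (n - i)) => p.2 (⟨i + 1 + (j : ℕ), by omega⟩ : Fin (n + 1))) :=
    measurable_pi_lambda _ fun j => (measurable_pi_apply _).comp measurable_snd
  have h2T : MeasurableSet[MeasurableSpace.comap T inferInstance] (W ⁻¹' B) := by
    refine ⟨(fun (p : (Π j : Fin i, 𝒴 j) × (Π j : Fin (n + 1), 𝒳 j)) (j : Fin (n - i)) =>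
        p.2 (⟨i + 1 + (j : ℕ), by omega⟩ : Fin (n + 1))) ⁻¹' B, hφm hB, ?_⟩
    rfl
  have hmeas_h : Measurable h :=
    ((measurable_condDistrib hA).mono hZm.comap_le le_rfl).ennreal_toReal
  have hsm' : StronglyMeasurable[MeasurableSpace.comap Z inferInstance] h :=
    (@Measurable.ennreal_toReal _ (MeasurableSpace.comap Z inferInstance) _ (measurable_condDistrib hA)).stronglyMeasurable
  have hint_h : Integrable h μ := integrable_toReal_condDistrib hZm.aemeasurable hA
  have hint_F2 : Integrable F2 μ := (integrable_const 1).indicator (hWm hB)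
  have hint_F1 : Integrable F1 μ := (integrable_const 1).indicator (hY i hA)
  have hprod_eq : Set.indicator ((Y i) ⁻¹' A ∩ W ⁻¹' B) (fun _ => (1 : ℝ)) = F2 * F1 := by
    funext ω
    by_cases h1 : ω ∈ (Y i) ⁻¹' A <;> by_cases h2 : ω ∈ W ⁻¹' B <;>
      simp [hF1def, hF2def, Set.indicator_apply, Set.mem_inter_iff, h1, h2]
  have hint_prod : Integrable (F2 * F1) μ := by
    rw [← hprod_eq]
    exact (integrable_const 1).indicator ((hY i hA).inter (hWm hB))
  have hint_hF2 : Integrable (h * F2) μ := by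
    refine Integrable.mono' hint_h ?_ ?_
    · exact (hmeas_h.mul (measurable_const.indicator (hWm hB))).aestronglyMeasurable
    refine Filter.Eventually.of_forall fun ω => ?_
    rw [Pi.mul_apply, norm_mul]
    by_cases h2 : ω ∈ W ⁻¹' B
    · rw [hF2def, Set.indicator_of_mem h2]
      simp [hhdef, abs_of_nonneg ENNReal.toReal_nonneg]
    · rw [hF2def, Set.indicator_of_notMem h2]
      simp [hhdef, ENNReal.toReal_nonneg]
  have i1 : μ⟦(Y i) ⁻¹' A ∩ W ⁻¹' B | MeasurableSpace.comap T inferInstance⟧ =ᵐ[μ] F2 * h := by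
    calc μ⟦(Y i) ⁻¹' A ∩ W ⁻¹' B | MeasurableSpace.comap T inferInstance⟧
        = μ[F2 * F1 | MeasurableSpace.comap T inferInstance] := by rw [hprod_eq]
      _ =ᵐ[μ] F2 * μ[F1 | MeasurableSpace.comap T inferInstance] :=
          condExp_mul_of_stronglyMeasurable_left (stronglyMeasurable_const.indicator h2T)
            hint_prod hint_F1
      _ =ᵐ[μ] F2 * h := Filter.EventuallyEq.mul Filter.EventuallyEq.rfl (hcond hA).symm
  have e1 : μ⟦(Y i) ⁻¹' A ∩ W ⁻¹' B | MeasurableSpace.comap Z inferInstance⟧ =ᵐ[μ] μ[F2 * h | MeasurableSpace.comap Z inferInstance] :=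
    (condExp_condExp_of_le hm'T hTm.comap_le).symm.trans (condExp_congr_ae i1)
  have e2 : μ[F2 * h | MeasurableSpace.comap Z inferInstance] =ᵐ[μ] h * μ[F2 | MeasurableSpace.comap Z inferInstance] := by
    rw [mul_comm F2 h]
    exact condExp_mul_of_stronglyMeasurable_left hsm' hint_hF2 hint_F2
  have e3 : μ⟦(Y i) ⁻¹' A | MeasurableSpace.comap Z inferInstance⟧ =ᵐ[μ] h := by
    calc μ⟦(Y i) ⁻¹' A | MeasurableSpace.comap Z inferInstance⟧
        =ᵐ[μ] μ[μ⟦(Y i) ⁻¹' A | MeasurableSpace.comap T inferInstance⟧ | MeasurableSpace.comap Z inferInstance] := (condExp_condExp_of_le hm'T hTm.comap_le).symm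
      _ =ᵐ[μ] μ[h | MeasurableSpace.comap Z inferInstance] := condExp_congr_ae (hcond hA).symm
      _ =ᵐ[μ] h := by rw [condExp_of_stronglyMeasurable hZm.comap_le hsm' hint_h]
  refine (e1.trans (e2.trans ?_))
  exact Filter.EventuallyEq.mul e3.symm Filter.EventuallyEq.rfl
end

section
/- Let X_0,...,X_n and Y_0,...,Y_n be random variables on a common probability space with values in Polish spaces. If for each i = 0,1,...,n-1 the Markov chain Y_i ↔ (X^i, Y^{i-1}) ↔ (X_{i+1},...,X_n) holds (Y_i conditionally independent of (X_{i+1},...,X_n) given (X^i, Y^{i-1})), then for each i = 0,1,...,n-1 the Markov chain Y^i ↔ X^i ↔ X_{i+1} holds, i.e. Y^i = (Y_0,...,Y_i) is conditionally independent of X_{i+1} given X^i. -/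
open MeasureTheory ProbabilityTheory

section Aux

variable {Ω : Type*} {m' m₁ m₂ m₃ : MeasurableSpace Ω}
  {mΩ : MeasurableSpace Ω} [StandardBorelSpace Ω] [Nonempty Ω]
  {μ : Measure Ω} [IsProbabilityMeasure μ]

/-- The sup of two σ-algebras is generated by the π-system of intersections. -/
lemma sup_eq_generateFrom_inter (m' m₁ : MeasurableSpace Ω) :
    m' ⊔ m₁ = MeasurableSpace.generateFrom
      {s | ∃ s₁ s₂, MeasurableSet[m'] s₁ ∧ MeasurableSet[m₁] s₂ ∧ s = s₁ ∩ s₂} := by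
  refine le_antisymm (sup_le ?_ ?_) (MeasurableSpace.generateFrom_le ?_)
  · intro s hs
    exact MeasurableSpace.measurableSet_generateFrom
      ⟨s, Set.univ, hs, MeasurableSet.univ, (Set.inter_univ s).symm⟩
  · intro s hs
    exact MeasurableSpace.measurableSet_generateFrom
      ⟨Set.univ, s, MeasurableSet.univ, hs, (Set.univ_inter s).symm⟩
  · rintro s ⟨s₁, s₂, h₁, h₂, rfl⟩
    exact ((le_sup_left : m' ≤ m' ⊔ m₁) _ h₁).inter ((le_sup_right : m₁ ≤ m' ⊔ m₁) _ h₂)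

lemma isPiSystem_inter_sets (m' m₁ : MeasurableSpace Ω) :
    IsPiSystem {s : Set Ω | ∃ s₁ s₂, MeasurableSet[m'] s₁ ∧ MeasurableSet[m₁] s₂ ∧ s = s₁ ∩ s₂} := by
  rintro _ ⟨a₁, a₂, ha₁, ha₂, rfl⟩ _ ⟨b₁, b₂, hb₁, hb₂, rfl⟩ _
  refine ⟨a₁ ∩ b₁, a₂ ∩ b₂, ha₁.inter hb₁, ha₂.inter hb₂, ?_⟩
  ext x; simp only [Set.mem_inter_iff]; tauto

lemma integrable_indicator_mul {g : Ω → ℝ} {A : Set Ω} (hA : MeasurableSet[mΩ] A)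
    (hg : Integrable g μ) :
    Integrable (fun x => A.indicator (fun _ => (1 : ℝ)) x * g x) μ := by
  refine hg.bdd_mul ((stronglyMeasurable_const.indicator hA).aestronglyMeasurable) (c := 1) (Filter.Eventually.of_forall fun x => ?_)
  by_cases hx : x ∈ A <;> simp [hx]

lemma integrable_mul_indicator {g : Ω → ℝ} {A : Set Ω} (hA : MeasurableSet[mΩ] A)
    (hg : Integrable g μ) :
    Integrable (g * A.indicator (fun _ => (1 : ℝ))) μ := by
  have h := integrable_indicator_mul (μ := μ) hA hg
  have : (g * A.indicator (fun _ => (1 : ℝ)))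
      = fun x => A.indicator (fun _ => (1 : ℝ)) x * g x := by
    ext x; exact mul_comm _ _
  rw [this]
  exact h

/-- Characterization of conditional independence via conditional expectations:
`m₁` and `m₂` are conditionally independent given `m'` iff for every `m₂`-measurable set `B`,
the conditional expectation of `1_B` given `m' ⊔ m₁` equals the one given `m'`. -/
theorem condIndep_iff_condexp_eq
    (hm' : m' ≤ mΩ) (hm₁ : m₁ ≤ mΩ) (hm₂ : m₂ ≤ mΩ) :
    CondIndep m' m₁ m₂ hm' μ ↔
      ∀ B, MeasurableSet[m₂] B →
        μ[B.indicator (fun _ => (1 : ℝ)) | m' ⊔ m₁] =ᵐ[μ] μ[B.indicator (fun _ => (1 : ℝ)) | m'] := by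
  have hsup : m' ⊔ m₁ ≤ mΩ := sup_le hm' hm₁
  constructor
  · intro h B hB
    have hBΩ : MeasurableSet[mΩ] B := hm₂ B hB
    have hint : Integrable (B.indicator (fun _ => (1 : ℝ))) μ :=
      (integrable_const (1 : ℝ)).indicator hBΩ
    have h' := (condIndep_iff m' m₁ m₂ hm' hm₁ hm₂ μ).mp h
    set f := μ[B.indicator (fun _ => (1 : ℝ)) | m'] with hfdef
    have key : ∀ s, MeasurableSet[m' ⊔ m₁] s →
        ∫ x in s, f x ∂μ = ∫ x in s, B.indicator (fun _ => (1 : ℝ)) x ∂μ := by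
      intro s hs
      refine MeasurableSpace.induction_on_inter (m := m' ⊔ m₁)
        (C := fun t _ => ∫ x in t, f x ∂μ = ∫ x in t, B.indicator (fun _ => (1 : ℝ)) x ∂μ)
        (sup_eq_generateFrom_inter m' m₁) (isPiSystem_inter_sets m' m₁)
        (by simp) ?_ ?_ ?_ s hs
      · -- basic sets s₁ ∩ s₂
        rintro _ ⟨s₁, s₂, hs₁, hs₂, rfl⟩
        have hs₁Ω : MeasurableSet[mΩ] s₁ := hm' _ hs₁
        have hs₂Ω : MeasurableSet[mΩ] s₂ := hm₁ _ hs₂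
        have hf_meas : StronglyMeasurable[m'] f := stronglyMeasurable_condExp
        have hmul : Integrable (f * s₂.indicator (fun _ => (1 : ℝ))) μ :=
          integrable_mul_indicator hs₂Ω integrable_condExp
        -- LHS
        have hL1 : ∫ x in s₁ ∩ s₂, f x ∂μ = ∫ x in s₁, s₂.indicator f x ∂μ :=
          (setIntegral_indicator hs₂Ω).symm
        have hL2 : s₂.indicator f = f * s₂.indicator (fun _ => (1 : ℝ)) := by
          ext x; by_cases hx : x ∈ s₂ <;> simp [hx]
        have hL3 : ∫ x in s₁, (f * s₂.indicator (fun _ => (1 : ℝ))) x ∂μ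
            = ∫ x in s₁, (μ[f * s₂.indicator (fun _ => (1 : ℝ)) | m']) x ∂μ :=
          (setIntegral_condExp hm' hmul hs₁).symm
        have hL4 : μ[f * s₂.indicator (fun _ => (1 : ℝ)) | m']
            =ᵐ[μ] f * μ[s₂.indicator (fun _ => (1 : ℝ)) | m'] :=
          condExp_mul_of_stronglyMeasurable_left hf_meas hmul
            ((integrable_const (1 : ℝ)).indicator hs₂Ω)
        -- RHS
        have hR1 : ∫ x in s₁ ∩ s₂, B.indicator (fun _ => (1 : ℝ)) x ∂μ
            = ∫ x in s₁, (s₂ ∩ B).indicator (fun _ => (1 : ℝ)) x ∂μ := by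
          rw [← setIntegral_indicator hs₂Ω]
          congr 1
          ext x
          by_cases hx : x ∈ s₂ <;> by_cases hxB : x ∈ B <;>
            simp [hx, hxB, Set.indicator_of_mem, Set.indicator_of_notMem]
        have hR2 : ∫ x in s₁, (s₂ ∩ B).indicator (fun _ => (1 : ℝ)) x ∂μ
            = ∫ x in s₁, (μ[(s₂ ∩ B).indicator (fun _ => (1 : ℝ)) | m']) x ∂μ :=
          (setIntegral_condExp hm' ((integrable_const (1 : ℝ)).indicator (hs₂Ω.inter hBΩ))
            hs₁).symm
        have hR3 := h' s₂ B hs₂ hB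
        calc ∫ x in s₁ ∩ s₂, f x ∂μ
            = ∫ x in s₁, (μ[f * s₂.indicator (fun _ => (1 : ℝ)) | m']) x ∂μ := by
              rw [hL1]; rw [hL2]; exact hL3
          _ = ∫ x in s₁, (f * μ[s₂.indicator (fun _ => (1 : ℝ)) | m']) x ∂μ :=
              setIntegral_congr_ae hs₁Ω (hL4.mono fun x hx _ => hx)
          _ = ∫ x in s₁, (μ[s₂.indicator (fun _ => (1 : ℝ)) | m'] * f) x ∂μ := by
              congr 1; ext x; exact mul_comm _ _
          _ = ∫ x in s₁, (μ[(s₂ ∩ B).indicator (fun _ => (1 : ℝ)) | m']) x ∂μ :=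
              (setIntegral_congr_ae hs₁Ω (hR3.mono fun x hx _ => hx.symm))
          _ = ∫ x in s₁ ∩ s₂, B.indicator (fun _ => (1 : ℝ)) x ∂μ := by
              rw [← hR2, ← hR1]
      · -- complement
        intro t ht hCt
        have htΩ : MeasurableSet[mΩ] t := hsup t ht
        have e1 : ∫ x in t, f x ∂μ + ∫ x in tᶜ, f x ∂μ = ∫ x, f x ∂μ :=
          integral_add_compl htΩ integrable_condExp
        have e2 : ∫ x in t, B.indicator (fun _ => (1 : ℝ)) x ∂μ
            + ∫ x in tᶜ, B.indicator (fun _ => (1 : ℝ)) x ∂μ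
            = ∫ x, B.indicator (fun _ => (1 : ℝ)) x ∂μ :=
          integral_add_compl htΩ hint
        have e3 : ∫ x, f x ∂μ = ∫ x, B.indicator (fun _ => (1 : ℝ)) x ∂μ :=
          integral_condExp hm'
        have := e1.trans (e3.trans e2.symm)
        rw [hCt] at this
        linarith
      · -- disjoint union
        intro g hdisj hmeas hC
        rw [integral_iUnion (fun i => hsup _ (hmeas i)) hdisj
            integrable_condExp.integrableOn,
          integral_iUnion (fun i => hsup _ (hmeas i)) hdisj hint.integrableOn]
        exact tsum_congr hC
    exact (ae_eq_condExp_of_forall_setIntegral_eq hsup hint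
      (fun s _ _ => integrable_condExp.integrableOn)
      (fun s hs _ => key s hs)
      (((stronglyMeasurable_condExp (m := m') (μ := μ) (f := B.indicator (fun _ => (1 : ℝ)))).mono
        (le_sup_left : m' ≤ m' ⊔ m₁)).aestronglyMeasurable)).symm
  · intro hCE
    rw [condIndep_iff m' m₁ m₂ hm' hm₁ hm₂ μ]
    intro A B hA hB
    have hAΩ : MeasurableSet[mΩ] A := hm₁ A hA
    have hBΩ : MeasurableSet[mΩ] B := hm₂ B hB
    set iA := A.indicator (fun _ => (1 : ℝ)) with hiAdef
    set iB := B.indicator (fun _ => (1 : ℝ)) with hiBdef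
    have hiA : Integrable iA μ := (integrable_const (1 : ℝ)).indicator hAΩ
    have hiB : Integrable iB μ := (integrable_const (1 : ℝ)).indicator hBΩ
    have h1 : (A ∩ B).indicator (fun _ => (1 : ℝ)) = iA * iB := by
      ext x
      by_cases hxA : x ∈ A <;> by_cases hxB : x ∈ B <;>
        simp [hiAdef, hiBdef, hxA, hxB, Set.indicator_of_mem, Set.indicator_of_notMem]
    have hiAB : Integrable (iA * iB) μ := by
      rw [← h1]; exact (integrable_const (1 : ℝ)).indicator (hAΩ.inter hBΩ)
    have hiA_sm : StronglyMeasurable[m' ⊔ m₁] iA :=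
      stronglyMeasurable_const.indicator ((le_sup_right : m₁ ≤ m' ⊔ m₁) _ hA)
    have step1 : μ[iA * iB | m' ⊔ m₁] =ᵐ[μ] iA * μ[iB | m' ⊔ m₁] :=
      condExp_mul_of_stronglyMeasurable_left hiA_sm hiAB hiB
    have step2 : iA * μ[iB | m' ⊔ m₁] =ᵐ[μ] iA * μ[iB | m'] :=
      Filter.EventuallyEq.mul (Filter.EventuallyEq.refl _ iA) (hCE B hB)
    have hmul2 : Integrable (μ[iB | m'] * iA) μ :=
      integrable_mul_indicator hAΩ integrable_condExp
    have step3 : μ[μ[iB | m'] * iA | m'] =ᵐ[μ] μ[iB | m'] * μ[iA | m'] :=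
      condExp_mul_of_stronglyMeasurable_left stronglyMeasurable_condExp hmul2 hiA
    have hcomm : iA * μ[iB | m'] = μ[iB | m'] * iA := by ext x; exact mul_comm _ _
    calc μ[(A ∩ B).indicator (fun _ => (1 : ℝ)) | m']
        = μ[iA * iB | m'] := by rw [h1]
      _ =ᵐ[μ] μ[μ[iA * iB | m' ⊔ m₁] | m'] := (condExp_condExp_of_le le_sup_left hsup).symm
      _ =ᵐ[μ] μ[iA * μ[iB | m'] | m'] := condExp_congr_ae (step1.trans step2)
      _ = μ[μ[iB | m'] * iA | m'] := by rw [hcomm]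
      _ =ᵐ[μ] μ[iB | m'] * μ[iA | m'] := step3
      _ = μ[iA | m'] * μ[iB | m'] := mul_comm _ _

/-- Weak union: if `m₁ ⟂ m₂ ⊔ m₃ | m'` then `m₁ ⟂ m₂ | m' ⊔ m₃`. -/
theorem condIndep_weak_union
    (hm' : m' ≤ mΩ) (hm₁ : m₁ ≤ mΩ) (hm₂ : m₂ ≤ mΩ) (hm₃ : m₃ ≤ mΩ)
    (h : CondIndep m' m₁ (m₂ ⊔ m₃) hm' μ) :
    CondIndep (m' ⊔ m₃) m₁ m₂ (sup_le hm' hm₃) μ := by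
  have hCE := (condIndep_iff_condexp_eq hm' (sup_le hm₂ hm₃) hm₁).mp h.symm
  refine CondIndep.symm ?_
  rw [condIndep_iff_condexp_eq (sup_le hm' hm₃) hm₂ hm₁]
  intro A hA
  set iA := A.indicator (fun _ => (1 : ℝ))
  have e2 : μ[iA | m' ⊔ (m₂ ⊔ m₃)] =ᵐ[μ] μ[iA | m'] := hCE A hA
  have h1 : m' ⊔ m₃ ⊔ m₂ = m' ⊔ (m₂ ⊔ m₃) := by
    rw [sup_assoc, sup_comm m₃ m₂]
  have e3 : μ[iA | m' ⊔ m₃] =ᵐ[μ] μ[iA | m'] := by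
    have t1 : μ[μ[iA | m' ⊔ (m₂ ⊔ m₃)] | m' ⊔ m₃] =ᵐ[μ] μ[iA | m' ⊔ m₃] :=
      condExp_condExp_of_le (sup_le_sup_left le_sup_right m') (sup_le hm' (sup_le hm₂ hm₃))
    have t2 : μ[μ[iA | m' ⊔ (m₂ ⊔ m₃)] | m' ⊔ m₃] =ᵐ[μ] μ[μ[iA | m'] | m' ⊔ m₃] :=
      condExp_congr_ae e2
    have t3 : μ[μ[iA | m'] | m' ⊔ m₃] = μ[iA | m'] :=
      condExp_of_stronglyMeasurable (sup_le hm' hm₃)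
        (stronglyMeasurable_condExp.mono le_sup_left) integrable_condExp
    exact t1.symm.trans (t2.trans (by rw [t3]))
  calc μ[iA | m' ⊔ m₃ ⊔ m₂] = μ[iA | m' ⊔ (m₂ ⊔ m₃)] := by rw [h1]
    _ =ᵐ[μ] μ[iA | m'] := e2
    _ =ᵐ[μ] μ[iA | m' ⊔ m₃] := e3.symm

/-- Contraction: if `m₁ ⟂ m₂ | m'` and `m₃ ⟂ m₂ | m' ⊔ m₁` then `m₁ ⊔ m₃ ⟂ m₂ | m'`. -/
theorem condIndep_contraction
    (hm' : m' ≤ mΩ) (hm₁ : m₁ ≤ mΩ) (hm₂ : m₂ ≤ mΩ) (hm₃ : m₃ ≤ mΩ)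
    (h1 : CondIndep m' m₁ m₂ hm' μ)
    (h2 : CondIndep (m' ⊔ m₁) m₃ m₂ (sup_le hm' hm₁) μ) :
    CondIndep m' (m₁ ⊔ m₃) m₂ hm' μ := by
  rw [condIndep_iff_condexp_eq hm' (sup_le hm₁ hm₃) hm₂]
  intro B hB
  have e1 := (condIndep_iff_condexp_eq hm' hm₁ hm₂).mp h1 B hB
  have e2 := (condIndep_iff_condexp_eq (sup_le hm' hm₁) hm₃ hm₂).mp h2 B hB
  have hassoc : m' ⊔ (m₁ ⊔ m₃) = m' ⊔ m₁ ⊔ m₃ := (sup_assoc m' m₁ m₃).symm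
  rw [hassoc]
  exact e2.trans e1

/-- Transport `CondIndep` along equalities of σ-algebras. -/
lemma condIndep_congr {m'' m₁' m₂' : MeasurableSpace Ω} {hm' : m' ≤ mΩ}
    (h : CondIndep m' m₁ m₂ hm' μ) (e' : m' = m'') (e₁ : m₁ = m₁') (e₂ : m₂ = m₂')
    (hm'' : m'' ≤ mΩ) :
    CondIndep m'' m₁' m₂' hm'' μ := by
  subst e' e₁ e₂
  exact h

/-- comap of a "vector" map into a pi type is the sup of the comaps of the components. -/
lemma comap_pi_map {ι : Type*} {β : ι → Type*} [∀ i, MeasurableSpace (β i)]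
    (f : ∀ i, Ω → β i) :
    MeasurableSpace.comap (fun ω (i : ι) => f i ω) MeasurableSpace.pi
      = ⨆ i, MeasurableSpace.comap (f i) inferInstance := by
  rw [MeasurableSpace.pi, MeasurableSpace.comap_iSup]
  congr 1
  ext i
  rw [MeasurableSpace.comap_comp]

lemma comap_prod_map {β γ : Type*} [mβ : MeasurableSpace β] [mγ : MeasurableSpace γ]
    (f : Ω → β) (g : Ω → γ) :
    MeasurableSpace.comap (fun ω => (f ω, g ω)) inferInstance
      = MeasurableSpace.comap f mβ ⊔ MeasurableSpace.comap g mγ := by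
  rw [show (inferInstance : MeasurableSpace (β × γ))
      = mβ.comap Prod.fst ⊔ mγ.comap Prod.snd from rfl,
    MeasurableSpace.comap_sup, MeasurableSpace.comap_comp, MeasurableSpace.comap_comp]
  rfl

lemma iSup_fin_congr {k l : ℕ} (h : k = l) (m : ℕ → MeasurableSpace Ω) :
    (⨆ j : Fin k, m j) = ⨆ j : Fin l, m j := by subst h; rfl

lemma iSup_fin_succ (k : ℕ) (m : ℕ → MeasurableSpace Ω) :
    (⨆ j : Fin (k + 1), m j) = (⨆ j : Fin k, m j) ⊔ m k := by
  apply le_antisymm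
  · refine iSup_le fun j => ?_
    induction j using Fin.lastCases with
    | last => simpa using le_sup_right
    | cast i =>
      refine le_trans ?_ (le_sup_left : (⨆ j : Fin k, m j) ≤ _)
      simpa using le_iSup (fun j : Fin k => m j) i
  · refine sup_le (iSup_le fun j => ?_) ?_
    · have := le_iSup (fun j : Fin (k + 1) => m j) j.castSucc
      simpa using this
    · have := le_iSup (fun j : Fin (k + 1) => m j) (Fin.last k)
      simpa using this

lemma iSup_fin_front (k : ℕ) (m : ℕ → MeasurableSpace Ω) :
    (⨆ j : Fin (k + 1), m j) = m 0 ⊔ ⨆ j : Fin k, m (j + 1) := by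
  apply le_antisymm
  · refine iSup_le fun j => ?_
    induction j using Fin.cases with
    | zero => simpa using (le_sup_left : m 0 ≤ _)
    | succ i =>
      refine le_trans ?_ (le_sup_right : (⨆ j : Fin k, m (j + 1)) ≤ _)
      have := le_iSup (fun j : Fin k => m (j + 1)) i
      simpa using this
  · refine sup_le ?_ (iSup_le fun j => ?_)
    · have := le_iSup (fun j : Fin (k + 1) => m j) 0
      simpa using this
    · have := le_iSup (fun j : Fin (k + 1) => m j) j.succ
      simpa [Fin.val_succ] using this

end Aux

/-- If for each `i < n` the Markov chain
`Y_i ↔ (X^i, Y^{i-1}) ↔ (X_{i+1}, …, X_n)` holds (i.e. `Y_i` is conditionally independent of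
the future source symbols `(X_{i+1}, …, X_n)` given `(X^i, Y^{i-1})`), then for each `i < n`
the Markov chain `Y^i ↔ X^i ↔ X_{i+1}` holds, i.e. `Y^i = (Y_0, …, Y_i)` is conditionally
independent of `X_{i+1}` given `X^i`. -/
theorem stmt1
    {Ω : Type*} [MeasurableSpace Ω] [StandardBorelSpace Ω] [Nonempty Ω]
    (μ : Measure Ω) [IsProbabilityMeasure μ]
    {𝒳 𝒴 : ℕ → Type*}
    [∀ i, MeasurableSpace (𝒳 i)] [∀ i, TopologicalSpace (𝒳 i)]
    [∀ i, PolishSpace (𝒳 i)] [∀ i, BorelSpace (𝒳 i)]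
    [∀ i, MeasurableSpace (𝒴 i)] [∀ i, TopologicalSpace (𝒴 i)]
    [∀ i, PolishSpace (𝒴 i)] [∀ i, BorelSpace (𝒴 i)]
    (n : ℕ) (X : (i : ℕ) → Ω → 𝒳 i) (Y : (i : ℕ) → Ω → 𝒴 i)
    (hX : ∀ i, Measurable (X i)) (hY : ∀ i, Measurable (Y i))
    -- hypothesis: `Y_i ↔ (X^i, Y^{i-1}) ↔ (X_{i+1}, …, X_n)` for every `i < n`
    (hMC : ∀ i < n,
      CondIndepFun
        (MeasurableSpace.comap
          (fun ω => ((fun j : Fin i => Y j ω), (fun j : Fin (i + 1) => X j ω))) inferInstance)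
        (((measurable_pi_lambda _ fun j : Fin i => hY j).prodMk
          (measurable_pi_lambda _ fun j : Fin (i + 1) => hX j)).comap_le)
        (Y i) (fun ω (j : Fin (n - i)) => X (i + 1 + j) ω) μ) :
    -- conclusion: `Y^i ↔ X^i ↔ X_{i+1}` for every `i < n`
    ∀ i < n,
      CondIndepFun
        (MeasurableSpace.comap (fun ω (j : Fin (i + 1)) => X j ω) inferInstance)
        ((measurable_pi_lambda _ fun j : Fin (i + 1) => hX j).comap_le)
        (fun ω (j : Fin (i + 1)) => Y j ω) (X (i + 1)) μ := by
  -- σ-algebras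
  set G : ℕ → MeasurableSpace Ω :=
    fun i => ⨆ j : Fin (i + 1), MeasurableSpace.comap (X j) inferInstance with hGdef
  set H : ℕ → MeasurableSpace Ω :=
    fun i => ⨆ j : Fin i, MeasurableSpace.comap (Y j) inferInstance with hHdef
  set F : ℕ → MeasurableSpace Ω :=
    fun i => ⨆ j : Fin (n - i), MeasurableSpace.comap (X (i + 1 + j)) inferInstance with hFdef
  have hGle : ∀ i, G i ≤ _ := fun i => iSup_le fun j => (hX j).comap_le
  have hHle : ∀ i, H i ≤ _ := fun i => iSup_le fun j => (hY j).comap_le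
  have hFle : ∀ i, F i ≤ _ := fun i => iSup_le fun j => (hX _).comap_le
  -- comap identities
  have hGeq : ∀ i, MeasurableSpace.comap (fun ω (j : Fin (i + 1)) => X j ω) inferInstance = G i :=
    fun i => comap_pi_map (fun j : Fin (i + 1) => X j)
  have hHeq : ∀ i, MeasurableSpace.comap (fun ω (j : Fin i) => Y j ω) inferInstance = H i :=
    fun i => comap_pi_map (fun j : Fin i => Y j)
  have hFeq : ∀ i,
      MeasurableSpace.comap (fun ω (j : Fin (n - i)) => X (i + 1 + j) ω) inferInstance = F i :=
    fun i => comap_pi_map (fun j : Fin (n - i) => fun ω => X (i + 1 + j) ω)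
  -- recursions
  have hGsucc : ∀ i, G (i + 1) = G i ⊔ MeasurableSpace.comap (X (i + 1)) inferInstance :=
    fun i => iSup_fin_succ (i + 1) (fun t => MeasurableSpace.comap (X t) inferInstance)
  have hHsucc : ∀ i, H (i + 1) = H i ⊔ MeasurableSpace.comap (Y i) inferInstance :=
    fun i => iSup_fin_succ i (fun t => MeasurableSpace.comap (Y t) inferInstance)
  have hFsucc : ∀ i, i < n →
      F i = MeasurableSpace.comap (X (i + 1)) inferInstance ⊔ F (i + 1) := by
    intro i hi
    have hk : n - i = (n - (i + 1)) + 1 := by omega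
    calc F i = ⨆ j : Fin ((n - (i + 1)) + 1),
          MeasurableSpace.comap (X (i + 1 + j)) inferInstance :=
        iSup_fin_congr hk (fun t => MeasurableSpace.comap (X (i + 1 + t)) inferInstance)
      _ = MeasurableSpace.comap (X (i + 1 + 0)) inferInstance ⊔
          ⨆ j : Fin (n - (i + 1)), MeasurableSpace.comap (X (i + 1 + (j + 1))) inferInstance :=
        iSup_fin_front (n - (i + 1)) (fun t => MeasurableSpace.comap (X (i + 1 + t)) inferInstance)
      _ = MeasurableSpace.comap (X (i + 1)) inferInstance ⊔ F (i + 1) := by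
        congr 1
        refine iSup_congr fun j => ?_
        have hj : i + 1 + ((j : ℕ) + 1) = i + 1 + 1 + (j : ℕ) := by omega
        rw [hj]
  -- hypothesis in σ-algebra form
  have hMC' : ∀ i, i < n →
      CondIndep (H i ⊔ G i) (MeasurableSpace.comap (Y i) inferInstance) (F i)
        (sup_le (hHle i) (hGle i)) μ := by
    intro i hi
    have h := (condIndepFun_iff_condIndep _ _ _ _ μ).mp (hMC i hi)
    refine condIndep_congr h ?_ rfl (hFeq i) _
    rw [comap_prod_map, hGeq i, hHeq i]
  -- main induction
  have main : ∀ i, i < n → CondIndep (G i) (H (i + 1)) (F i) (hGle i) μ := by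
    intro i
    induction i with
    | zero =>
      intro h0
      have h := hMC' 0 h0
      refine condIndep_congr h ?_ ?_ rfl _
      · have : H 0 = ⊥ := by
          rw [hHdef]
          exact iSup_of_empty _
        rw [this, bot_sup_eq]
      · rw [hHsucc 0]
        have : H 0 = ⊥ := by
          rw [hHdef]
          exact iSup_of_empty _
        rw [this, bot_sup_eq]
    | succ i ih =>
      intro hi
      have hIH := ih (Nat.lt_of_succ_lt hi)
      -- F i = comap X_{i+1} ⊔ F (i+1)
      have h1 : CondIndep (G i) (H (i + 1))
          (F (i + 1) ⊔ MeasurableSpace.comap (X (i + 1)) inferInstance) (hGle i) μ :=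
        condIndep_congr hIH rfl rfl
          (by rw [hFsucc i (Nat.lt_of_succ_lt hi), sup_comm]) _
      have h2 : CondIndep (G i ⊔ MeasurableSpace.comap (X (i + 1)) inferInstance)
          (H (i + 1)) (F (i + 1)) (sup_le (hGle i) (hX (i + 1)).comap_le) μ :=
        condIndep_weak_union (hGle i) (hHle (i + 1)) (hFle (i + 1))
          (hX (i + 1)).comap_le h1
      have h3 : CondIndep (G (i + 1)) (H (i + 1)) (F (i + 1)) (hGle (i + 1)) μ :=
        condIndep_congr h2 (hGsucc i).symm rfl rfl _
      have h4 : CondIndep (G (i + 1) ⊔ H (i + 1))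
          (MeasurableSpace.comap (Y (i + 1)) inferInstance) (F (i + 1))
          (sup_le (hGle (i + 1)) (hHle (i + 1))) μ :=
        condIndep_congr (hMC' (i + 1) hi) (sup_comm _ _) rfl rfl _
      have h5 : CondIndep (G (i + 1))
          (H (i + 1) ⊔ MeasurableSpace.comap (Y (i + 1)) inferInstance) (F (i + 1))
          (hGle (i + 1)) μ :=
        condIndep_contraction (hGle (i + 1)) (hHle (i + 1)) (hFle (i + 1))
          (hY (i + 1)).comap_le h3 h4
      exact condIndep_congr h5 rfl (hHsucc (i + 1)).symm rfl _
  -- conclusion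
  intro i hi
  rw [condIndepFun_iff_condIndep]
  have h := main i hi
  have hXle : MeasurableSpace.comap (X (i + 1)) inferInstance ≤ F i := by
    rw [hFsucc i hi]
    exact le_sup_left
  have h' : CondIndep (G i) (H (i + 1))
      (MeasurableSpace.comap (X (i + 1)) inferInstance) (hGle i) μ :=
    condIndep_of_condIndep_of_le_right h hXle
  exact condIndep_congr h' (hGeq i).symm (hHeq (i + 1)).symm rfl _
end

section
/- Let X_0,...,X_n and Y_0,...,Y_n be random variables on a common probability space with values in Polish spaces. If for each i = 0,1,...,n-1 the Markov chain Y^i ↔ X^i ↔ X_{i+1} holds (Y^i conditionally independent of X_{i+1} given X^i), then the regular conditional distribution of Y^n given X^n factorizes causally: P_{Y^n|X^n}(dy^n|x^n) = ⊗_{i=0}^n P_{Y_i|Y^{i-1},X^i}(dy_i|y^{i-1},x^i) for P_{X^n}-almost all x^n. -/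
open MeasureTheory ProbabilityTheory

open Set
open scoped ENNReal

section aux

variable {𝒳 𝒴 : ℕ → Type*} [∀ i, MeasurableSpace (𝒳 i)] [∀ i, MeasurableSpace (𝒴 i)]

lemma measurable_init (m : ℕ) :
    Measurable (fun (x : Π j : Fin (m+1), 𝒳 j) (j : Fin m) => x j.castSucc) :=
  measurable_pi_lambda _ fun j => measurable_pi_apply _

lemma measurable_snoc (m : ℕ) :
    Measurable (fun p : (Π j : Fin m, 𝒳 j) × 𝒳 m => (Fin.snoc p.1 p.2 : Π j : Fin (m+1), 𝒳 j)) := by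
  rw [measurable_pi_iff]
  intro j
  induction j using Fin.lastCases with
  | last => simp only [Fin.snoc_last]; exact measurable_snd
  | cast j => simp only [Fin.snoc_castSucc]; exact (measurable_pi_apply j).comp measurable_fst

/-- Kernel version of `causalProd`, carrying the Markov property. -/
noncomputable def causalKerP
    (κ : (i : ℕ) → Kernel ((Π j : Fin i, 𝒴 j) × (Π j : Fin (i + 1), 𝒳 j)) (𝒴 i))
    [∀ i, IsMarkovKernel (κ i)] :
    (m : ℕ) → { k : Kernel (Π j : Fin m, 𝒳 j) (Π j : Fin m, 𝒴 j) // IsMarkovKernel k }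
  | 0 => ⟨Kernel.const _ (Measure.dirac (fun j => j.elim0)), by infer_instance⟩
  | (m + 1) =>
      haveI := (causalKerP κ m).2
      ⟨(((causalKerP κ m).1.comap (fun x j => x j.castSucc) (measurable_init m)) ⊗ₖ
          ((κ m).comap Prod.swap measurable_swap)).map
          (fun p => (Fin.snoc p.1 p.2 : Π j : Fin (m+1), 𝒴 j)),
        Kernel.IsMarkovKernel.map _ (measurable_snoc m)⟩

noncomputable def causalKer
    (κ : (i : ℕ) → Kernel ((Π j : Fin i, 𝒴 j) × (Π j : Fin (i + 1), 𝒳 j)) (𝒴 i))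
    [∀ i, IsMarkovKernel (κ i)] (m : ℕ) :
    Kernel (Π j : Fin m, 𝒳 j) (Π j : Fin m, 𝒴 j) := (causalKerP κ m).1

instance {κ : (i : ℕ) → Kernel ((Π j : Fin i, 𝒴 j) × (Π j : Fin (i + 1), 𝒳 j)) (𝒴 i)}
    [∀ i, IsMarkovKernel (κ i)] (m : ℕ) : IsMarkovKernel (causalKer κ m) := (causalKerP κ m).2

lemma causalKer_apply
    (κ : (i : ℕ) → Kernel ((Π j : Fin i, 𝒴 j) × (Π j : Fin (i + 1), 𝒳 j)) (𝒴 i))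
    [∀ i, IsMarkovKernel (κ i)] :
    ∀ m x, causalKer κ m x = causalProd κ m x := by
  intro m
  induction m with
  | zero => intro x; rfl
  | succ m ih =>
    intro x
    haveI := (causalKerP κ m).2
    ext s hs
    have hbind : Measurable fun (y : Π j : Fin m, 𝒴 j) =>
        ((κ m (y, x)).map (fun z => (Fin.snoc y z : Π j : Fin (m+1), 𝒴 j))) := by
      apply Measure.measurable_of_measurable_coe
      intro t ht
      have : (fun y => ((κ m (y, x)).map (fun z => (Fin.snoc y z : Π j : Fin (m+1), 𝒴 j))) t)
          = fun y => ((κ m).comap (fun y => (y, x)) (measurable_id.prodMk measurable_const)) y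
            (Prod.mk y ⁻¹' ((fun p : (Π j : Fin m, 𝒴 j) × 𝒴 m => (Fin.snoc p.1 p.2 : Π j : Fin (m+1), 𝒴 j)) ⁻¹' t)) := by
        funext y
        have hfy : Measurable fun z : 𝒴 m => (Fin.snoc y z : Π j : Fin (m+1), 𝒴 j) :=
          (measurable_snoc m).comp measurable_prodMk_left
        rw [Kernel.comap_apply]
        exact Measure.map_apply hfy ht
      rw [this]
      exact Kernel.measurable_kernel_prodMk_left ((measurable_snoc m) ht)
    rw [causalProd, Measure.bind_apply hs hbind.aemeasurable]
    show ((((causalKerP κ m).1.comap (fun x j => x j.castSucc) (measurable_init m)) ⊗ₖ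
          ((κ m).comap Prod.swap measurable_swap)).map
          (fun p => (Fin.snoc p.1 p.2 : Π j : Fin (m+1), 𝒴 j))) x s = _
    rw [Kernel.map_apply' _ (measurable_snoc m) _ hs,
      Kernel.compProd_apply ((measurable_snoc m) hs)]
    rw [Kernel.comap_apply]
    have hck : (causalKerP κ m).1 (fun j => x j.castSucc) = causalProd κ m (fun j => x j.castSucc) := ih _
    rw [hck]
    congr 1
    funext y
    have hfy : Measurable fun z : 𝒴 m => (Fin.snoc y z : Π j : Fin (m+1), 𝒴 j) :=
      (measurable_snoc m).comp measurable_prodMk_left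
    exact (Measure.map_apply hfy hs).symm
lemma causalKer_succ_apply
    (κ : (i : ℕ) → Kernel ((Π j : Fin i, 𝒴 j) × (Π j : Fin (i + 1), 𝒳 j)) (𝒴 i))
    [∀ i, IsMarkovKernel (κ i)] (m : ℕ) (x : Π j : Fin (m+1), 𝒳 j)
    {t : Set (Π j : Fin (m+1), 𝒴 j)} (ht : MeasurableSet t) :
    causalKer κ (m+1) x t
      = ∫⁻ y, κ m (y, x) {z | (Fin.snoc y z : Π j : Fin (m+1), 𝒴 j) ∈ t}
          ∂(causalKer κ m (fun j => x j.castSucc)) := by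
  haveI := (causalKerP κ m).2
  show ((((causalKerP κ m).1.comap (fun x j => x j.castSucc) (measurable_init m)) ⊗ₖ
      ((κ m).comap Prod.swap measurable_swap)).map
      (fun p => (Fin.snoc p.1 p.2 : Π j : Fin (m+1), 𝒴 j))) x t = _
  rw [Kernel.map_apply' _ (measurable_snoc m) _ ht,
    Kernel.compProd_apply ((measurable_snoc m) ht), Kernel.comap_apply]
  rfl


end aux


lemma measure_ext_prod {γ δ : Type*} [MeasurableSpace γ] [MeasurableSpace δ]
    {ρ₁ ρ₂ : Measure (γ × δ)} [IsFiniteMeasure ρ₁] [IsFiniteMeasure ρ₂]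
    (h : ∀ s t, MeasurableSet s → MeasurableSet t → ρ₁ (s ×ˢ t) = ρ₂ (s ×ˢ t)) : ρ₁ = ρ₂ := by
  refine ext_of_generate_finite _ generateFrom_prod.symm isPiSystem_prod ?_ ?_
  · rintro _ ⟨s, hs, t, ht, rfl⟩
    exact h s t hs ht
  · simpa using h univ univ MeasurableSet.univ MeasurableSet.univ

lemma map_pair_eq_compProd_condDistrib
    {Ω A B : Type*} [MeasurableSpace Ω]
    [MeasurableSpace A] [MeasurableSpace B]
    [TopologicalSpace B] [PolishSpace B] [BorelSpace B] [Nonempty B]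
    (μ : Measure Ω) [IsFiniteMeasure μ]
    {W : Ω → A} {Z : Ω → B} (hW : Measurable W) (hZ : Measurable Z) :
    μ.map (fun ω => (W ω, Z ω)) = (μ.map W) ⊗ₘ condDistrib Z W μ := by
  haveI : IsFiniteMeasure (μ.map (fun ω => (W ω, Z ω))) :=
    Measure.isFiniteMeasure_map _ _
  have h1 : (μ.map (fun a => (W a, Z a))).fst = μ.map W := Measure.fst_map_prodMk hZ
  rw [condDistrib]
  conv_rhs => rw [← h1]
  rw [Measure.disintegrate]

lemma measure_preimage_pair_eq_lintegral_condDistrib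
    {Ω A B : Type*} [MeasurableSpace Ω]
    [MeasurableSpace A] [MeasurableSpace B]
    [TopologicalSpace B] [PolishSpace B] [BorelSpace B] [Nonempty B]
    (μ : Measure Ω) [IsFiniteMeasure μ]
    {W : Ω → A} {Z : Ω → B} (hW : Measurable W) (hZ : Measurable Z)
    {C : Set (A × B)} (hC : MeasurableSet C) :
    μ ((fun ω => (W ω, Z ω)) ⁻¹' C)
      = ∫⁻ ω, condDistrib Z W μ (W ω) (Prod.mk (W ω) ⁻¹' C) ∂μ := by
  haveI : IsFiniteMeasure (μ.map W) := Measure.isFiniteMeasure_map _ _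
  rw [← Measure.map_apply (hW.prodMk hZ) hC, map_pair_eq_compProd_condDistrib μ hW hZ,
    Measure.compProd_apply hC, lintegral_map (Kernel.measurable_kernel_prodMk_left hC) hW]

lemma map_pair_eq_compProd_comap_fst
    {Ω A C B : Type*} [MeasurableSpace Ω] [StandardBorelSpace Ω] [Nonempty Ω]
    [MeasurableSpace A] [MeasurableSpace C] [MeasurableSpace B]
    [TopologicalSpace B] [PolishSpace B] [BorelSpace B] [Nonempty B]
    (μ : Measure Ω) [IsProbabilityMeasure μ]
    {U : Ω → A} {Z : Ω → C} {V : Ω → B}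
    (hU : Measurable U) (hZ : Measurable Z) (hV : Measurable V)
    (hCI : CondIndepFun (MeasurableSpace.comap U inferInstance) hU.comap_le V Z μ) :
    μ.map (fun ω => ((U ω, Z ω), V ω))
      = (μ.map (fun ω => (U ω, Z ω))) ⊗ₘ ((condDistrib V U μ).comap Prod.fst measurable_fst) := by
  haveI : IsProbabilityMeasure (μ.map (fun ω => ((U ω, Z ω), V ω))) :=
    Measure.isProbabilityMeasure_map (((hU.prodMk hZ).prodMk hV).aemeasurable)
  haveI : IsProbabilityMeasure (μ.map (fun ω => (U ω, Z ω))) :=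
    Measure.isProbabilityMeasure_map ((hU.prodMk hZ).aemeasurable)
  -- key rectangle identity
  have key : ∀ (S₁ : Set A) (S₂ : Set C) (T : Set B), MeasurableSet S₁ → MeasurableSet S₂ →
      MeasurableSet T →
      μ (U ⁻¹' S₁ ∩ Z ⁻¹' S₂ ∩ V ⁻¹' T)
        = ∫⁻ ω in U ⁻¹' S₁ ∩ Z ⁻¹' S₂, condDistrib V U μ (U ω) T ∂μ := by
    intro S₁ S₂ T hS₁ hS₂ hT
    have hle : MeasurableSpace.comap U inferInstance ≤ ‹MeasurableSpace Ω› := hU.comap_le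
    have hFmeas : MeasurableSet (U ⁻¹' S₁ ∩ Z ⁻¹' S₂) := ((hU hS₁).inter (hZ hS₂))
    have hgmeas : Measurable (fun ω => condDistrib V U μ (U ω) T) :=
      (Kernel.measurable_coe _ hT).comp hU
    have hgle : ∀ ω, condDistrib V U μ (U ω) T ≤ 1 := fun ω => prob_le_one
    have hrhs_ne : (∫⁻ ω in U ⁻¹' S₁ ∩ Z ⁻¹' S₂, condDistrib V U μ (U ω) T ∂μ) ≠ ⊤ := by
      refine ne_top_of_le_ne_top (measure_ne_top μ (U ⁻¹' S₁ ∩ Z ⁻¹' S₂)) ?_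
      calc ∫⁻ ω in U ⁻¹' S₁ ∩ Z ⁻¹' S₂, condDistrib V U μ (U ω) T ∂μ
          ≤ ∫⁻ _ in U ⁻¹' S₁ ∩ Z ⁻¹' S₂, 1 ∂μ := lintegral_mono fun ω => hgle ω
        _ = μ (U ⁻¹' S₁ ∩ Z ⁻¹' S₂) := by simp
    rw [← ENNReal.toReal_eq_toReal_iff' (measure_ne_top μ _) hrhs_ne]
    have hrhs : (∫⁻ ω in U ⁻¹' S₁ ∩ Z ⁻¹' S₂, condDistrib V U μ (U ω) T ∂μ).toReal
        = ∫ ω in U ⁻¹' S₁ ∩ Z ⁻¹' S₂, (condDistrib V U μ (U ω) T).toReal ∂μ :=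
      (integral_toReal (hgmeas.aemeasurable.restrict)
        (Filter.Eventually.of_forall fun ω => lt_of_le_of_lt (hgle ω) ENNReal.one_lt_top)).symm
    rw [hrhs]
    set h : Ω → ℝ := μ⟦V ⁻¹' T | MeasurableSpace.comap U inferInstance⟧ with hh
    set ind : Ω → ℝ := (Z ⁻¹' S₂).indicator (fun _ => (1:ℝ)) with hind
    have h1 : (fun ω => (condDistrib V U μ (U ω) T).toReal) =ᵐ[μ] h :=
      condDistrib_ae_eq_condExp hU hV hT
    have e1 : ∫ ω in U ⁻¹' S₁ ∩ Z ⁻¹' S₂, (condDistrib V U μ (U ω) T).toReal ∂μ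
        = ∫ ω in U ⁻¹' S₁ ∩ Z ⁻¹' S₂, h ω ∂μ :=
      setIntegral_congr_ae hFmeas (h1.mono fun ω hω _ => hω)
    have e2 : ∫ ω in U ⁻¹' S₁ ∩ Z ⁻¹' S₂, h ω ∂μ
        = ∫ ω in U ⁻¹' S₁, (Z ⁻¹' S₂).indicator h ω ∂μ := by
      rw [setIntegral_indicator (hZ hS₂)]
    have hmul : (Z ⁻¹' S₂).indicator h = h * ind := by
      funext ω
      by_cases hω : ω ∈ Z ⁻¹' S₂ <;> simp [hind, Set.indicator_apply, hω]
    have hind_int : Integrable ind μ := (integrable_const (1:ℝ)).indicator (hZ hS₂)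
    have hmul_int : Integrable (h * ind) μ := by
      rw [← hmul]; exact integrable_condExp.indicator (hZ hS₂)
    have hE₁ : MeasurableSet[MeasurableSpace.comap U inferInstance] (U ⁻¹' S₁) := ⟨S₁, hS₁, rfl⟩
    have e3 : ∫ ω in U ⁻¹' S₁, (Z ⁻¹' S₂).indicator h ω ∂μ
        = ∫ ω in U ⁻¹' S₁, (μ[h * ind | MeasurableSpace.comap U inferInstance]) ω ∂μ := by
      rw [setIntegral_condExp hle hmul_int hE₁]
      exact setIntegral_congr_ae (hU hS₁) ((Filter.EventuallyEq.of_eq hmul).mono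
        fun ω hω _ => hω)
    have e4 : μ[h * ind | MeasurableSpace.comap U inferInstance]
        =ᵐ[μ] h * μ[ind | MeasurableSpace.comap U inferInstance] :=
      condExp_mul_of_stronglyMeasurable_left stronglyMeasurable_condExp hmul_int hind_int
    have hCI' := (condIndepFun_iff_condExp_inter_preimage_eq_mul
      (hm' := hle) hV hZ).mp hCI T S₂ hT hS₂
    have e5 : μ[h * ind | MeasurableSpace.comap U inferInstance]
        =ᵐ[μ] μ⟦V ⁻¹' T ∩ Z ⁻¹' S₂ | MeasurableSpace.comap U inferInstance⟧ := by
      refine e4.trans ?_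
      filter_upwards [hCI'] with ω hω
      simp only [Pi.mul_apply]
      rw [hh, hind]
      exact hω.symm
    have e6 : ∫ ω in U ⁻¹' S₁, (μ[h * ind | MeasurableSpace.comap U inferInstance]) ω ∂μ
        = ∫ ω in U ⁻¹' S₁,
            (μ⟦V ⁻¹' T ∩ Z ⁻¹' S₂ | MeasurableSpace.comap U inferInstance⟧) ω ∂μ :=
      setIntegral_congr_ae (hU hS₁) (e5.mono fun ω hω _ => hω)
    have e7 : ∫ ω in U ⁻¹' S₁,
          (μ⟦V ⁻¹' T ∩ Z ⁻¹' S₂ | MeasurableSpace.comap U inferInstance⟧) ω ∂μ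
        = ∫ ω in U ⁻¹' S₁, (V ⁻¹' T ∩ Z ⁻¹' S₂).indicator (fun _ => (1:ℝ)) ω ∂μ :=
      setIntegral_condExp hle ((integrable_const (1:ℝ)).indicator ((hV hT).inter (hZ hS₂))) hE₁
    have e8 : ∫ ω in U ⁻¹' S₁, (V ⁻¹' T ∩ Z ⁻¹' S₂).indicator (fun _ => (1:ℝ)) ω ∂μ
        = (μ (U ⁻¹' S₁ ∩ Z ⁻¹' S₂ ∩ V ⁻¹' T)).toReal := by
      have hseteq : U ⁻¹' S₁ ∩ (V ⁻¹' T ∩ Z ⁻¹' S₂) = U ⁻¹' S₁ ∩ Z ⁻¹' S₂ ∩ V ⁻¹' T := by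
        ext ω
        simp only [Set.mem_inter_iff, Set.mem_preimage]
        tauto
      rw [setIntegral_indicator ((hV hT).inter (hZ hS₂)), setIntegral_const, smul_eq_mul,
        mul_one, hseteq]
      rfl
    rw [e1, e2, e3, e6, e7, e8]
  -- now conclude by two applications of rectangle extensionality
  refine measure_ext_prod fun S T hS hT => ?_
  have hmain : ((μ.map (fun ω => ((U ω, Z ω), V ω))).restrict (univ ×ˢ T)).map Prod.fst
      = (((μ.map (fun ω => (U ω, Z ω))) ⊗ₘ
          ((condDistrib V U μ).comap Prod.fst measurable_fst)).restrict (univ ×ˢ T)).map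
          Prod.fst := by
    refine measure_ext_prod fun S₁ S₂ hS₁ hS₂ => ?_
    rw [Measure.map_apply measurable_fst (hS₁.prod hS₂),
      Measure.map_apply measurable_fst (hS₁.prod hS₂),
      Measure.restrict_apply (measurable_fst (hS₁.prod hS₂)),
      Measure.restrict_apply (measurable_fst (hS₁.prod hS₂))]
    have hset : (Prod.fst ⁻¹' (S₁ ×ˢ S₂) : Set ((A × C) × B)) ∩ univ ×ˢ T
        = (S₁ ×ˢ S₂) ×ˢ T := by
      ext p; simp [Set.mem_prod, and_assoc]
    rw [hset, Measure.map_apply ((hU.prodMk hZ).prodMk hV) ((hS₁.prod hS₂).prod hT),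
      Measure.compProd_apply_prod (hS₁.prod hS₂) hT]
    have hpre : (fun ω => ((U ω, Z ω), V ω)) ⁻¹' ((S₁ ×ˢ S₂) ×ˢ T)
        = U ⁻¹' S₁ ∩ Z ⁻¹' S₂ ∩ V ⁻¹' T := by
      ext ω; simp [Set.mem_prod, and_assoc]
    rw [hpre, key S₁ S₂ T hS₁ hS₂ hT]
    have hfmeas : Measurable fun p : A × C => condDistrib V U μ p.1 T :=
      (Kernel.measurable_coe _ hT).comp measurable_fst
    simp only [Kernel.comap_apply]
    rw [setLIntegral_map (hS₁.prod hS₂) hfmeas (hU.prodMk hZ), Set.mk_preimage_prod]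
  have h1 : (μ.map (fun ω => ((U ω, Z ω), V ω))) (S ×ˢ T)
      = (((μ.map (fun ω => ((U ω, Z ω), V ω))).restrict (univ ×ˢ T)).map Prod.fst) S := by
    rw [Measure.map_apply measurable_fst hS, Measure.restrict_apply (measurable_fst hS)]
    congr 1
    ext p; simp [Set.mem_prod]
  have h2 : ((μ.map (fun ω => (U ω, Z ω))) ⊗ₘ
        ((condDistrib V U μ).comap Prod.fst measurable_fst)) (S ×ˢ T)
      = ((((μ.map (fun ω => (U ω, Z ω))) ⊗ₘ
          ((condDistrib V U μ).comap Prod.fst measurable_fst)).restrict (univ ×ˢ T)).map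
          Prod.fst) S := by
    rw [Measure.map_apply measurable_fst hS, Measure.restrict_apply (measurable_fst hS)]
    congr 1
    ext p; simp [Set.mem_prod]
  rw [h1, h2, hmain]

lemma condIndepFun_of_subsingleton
    {Ω B C : Type*} {m' : MeasurableSpace Ω} {mΩ : MeasurableSpace Ω}
    [StandardBorelSpace Ω] [Nonempty Ω]
    [MeasurableSpace B] [Subsingleton B] [MeasurableSpace C]
    (hm' : m' ≤ mΩ) (μ : Measure Ω) [IsProbabilityMeasure μ]
    {V : Ω → B} {Z : Ω → C} (hV : Measurable V) (hZ : Measurable Z) :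
    CondIndepFun m' hm' V Z μ := by
  rw [condIndepFun_iff_condExp_inter_preimage_eq_mul hV hZ]
  intro s t _ _
  rcases Set.eq_empty_or_nonempty s with rfl | ⟨b, hb⟩
  · have hzero : (∅ : Set Ω).indicator (fun _ => (1:ℝ)) = (fun _ => (0:ℝ)) := by
      funext ω; simp
    simp only [Set.preimage_empty, Set.empty_inter, hzero]
    rw [condExp_const hm']
    filter_upwards with ω
    simp
  · have hsu : V ⁻¹' s = Set.univ := by
      ext ω
      simp only [Set.mem_preimage, Set.mem_univ, iff_true]
      rwa [Subsingleton.elim (V ω) b]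
    rw [hsu, Set.univ_inter]
    have h1 : (Set.univ : Set Ω).indicator (fun _ => (1:ℝ)) = fun _ => (1:ℝ) := by
      funext ω; simp
    rw [h1, condExp_const hm']
    filter_upwards with ω
    simp

section main
variable {Ω : Type*} [MeasurableSpace Ω] [StandardBorelSpace Ω] [Nonempty Ω]
    (μ : Measure Ω) [IsProbabilityMeasure μ]
    {𝒳 𝒴 : ℕ → Type*}
    [∀ i, MeasurableSpace (𝒳 i)] [∀ i, TopologicalSpace (𝒳 i)]
    [∀ i, PolishSpace (𝒳 i)] [∀ i, BorelSpace (𝒳 i)]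
    [∀ i, MeasurableSpace (𝒴 i)] [∀ i, TopologicalSpace (𝒴 i)]
    [∀ i, PolishSpace (𝒴 i)] [∀ i, BorelSpace (𝒴 i)] [∀ i, Nonempty (𝒴 i)]

lemma main_induction
    (n : ℕ) (X : (i : ℕ) → Ω → 𝒳 i) (Y : (i : ℕ) → Ω → 𝒴 i)
    (hX : ∀ i, Measurable (X i)) (hY : ∀ i, Measurable (Y i))
    (hMC : ∀ i < n,
      CondIndepFun
        (MeasurableSpace.comap (fun ω (j : Fin (i + 1)) => X j ω) inferInstance)
        ((measurable_pi_lambda _ fun j : Fin (i + 1) => hX j).comap_le)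
        (fun ω (j : Fin (i + 1)) => Y j ω) (X (i + 1)) μ) :
    ∀ m, m ≤ n + 1 →
      μ.map (fun ω => ((fun j : Fin m => X j ω), (fun j : Fin m => Y j ω)))
        = (μ.map (fun ω (j : Fin m) => X j ω)) ⊗ₘ
            causalKer (fun i => condDistrib (Y i)
              (fun ω => ((fun j : Fin i => Y j ω), (fun j : Fin (i + 1) => X j ω))) μ) m := by
  set κcd := fun i => condDistrib (Y i)
      (fun ω => ((fun j : Fin i => Y j ω), (fun j : Fin (i + 1) => X j ω))) μ with hκcd
  intro m
  induction m with
  | zero =>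
    intro _
    have hX0 : Measurable (fun ω (j : Fin 0) => X j ω) :=
      measurable_pi_lambda _ fun j => hX j
    haveI : IsProbabilityMeasure (μ.map (fun ω (j : Fin 0) => X j ω)) :=
      Measure.isProbabilityMeasure_map hX0.aemeasurable
    have hfun : (fun ω => ((fun j : Fin 0 => X j ω), (fun j : Fin 0 => Y j ω)))
        = (fun x => (x, (fun j : Fin 0 => j.elim0 : Π j : Fin 0, 𝒴 j)))
            ∘ (fun ω (j : Fin 0) => X j ω) := by
      funext ω
      exact congrArg _ (Subsingleton.elim _ _)
    rw [hfun, ← Measure.map_map measurable_prodMk_right hX0]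
    have hck : causalKer κcd 0
        = Kernel.const _ (Measure.dirac (fun j : Fin 0 => j.elim0)) := rfl
    rw [hck, Measure.compProd_const, Measure.prod_dirac]
  | succ m ih =>
    intro hm1
    have hm : m ≤ n + 1 := Nat.le_of_succ_le hm1
    have IH := ih hm
    -- abbreviations
    have hUm : Measurable (fun ω (j : Fin m) => X j ω) :=
      measurable_pi_lambda _ fun j => hX j
    have hVm : Measurable (fun ω (j : Fin m) => Y j ω) :=
      measurable_pi_lambda _ fun j => hY j
    have hXv1 : Measurable (fun ω (j : Fin (m+1)) => X j ω) :=
      measurable_pi_lambda _ fun j => hX j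
    have hYv1 : Measurable (fun ω (j : Fin (m+1)) => Y j ω) :=
      measurable_pi_lambda _ fun j => hY j
    have hWm : Measurable (fun ω =>
        ((fun j : Fin m => Y j ω), (fun j : Fin (m + 1) => X j ω))) := hVm.prodMk hXv1
    haveI : IsProbabilityMeasure (μ.map (fun ω (j : Fin m) => X j ω)) :=
      Measure.isProbabilityMeasure_map hUm.aemeasurable
    haveI : IsProbabilityMeasure (μ.map (fun ω (j : Fin (m+1)) => X j ω)) :=
      Measure.isProbabilityMeasure_map hXv1.aemeasurable
    -- the conditional distribution of Y^m given X^m is `causalKer κcd m`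
    have hae : ∀ᵐ x ∂(μ.map (fun ω (j : Fin m) => X j ω)),
        causalKer κcd m x = condDistrib (fun ω (j : Fin m) => Y j ω)
          (fun ω (j : Fin m) => X j ω) μ x :=
      (condDistrib_ae_eq_of_measure_eq_compProd_of_measurable hUm hVm IH).symm
    -- conditional independence `Y^m ⟂ X_m | X^m`
    have hCI : CondIndepFun
        (MeasurableSpace.comap (fun ω (j : Fin m) => X j ω) inferInstance)
        hUm.comap_le (fun ω (j : Fin m) => Y j ω) (X m) μ := by
      match m with
      | 0 => exact condIndepFun_of_subsingleton _ μ hVm (hX 0)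
      | (k+1) => exact hMC k (by omega)
    have ECI := map_pair_eq_compProd_comap_fst μ hUm (hX m) hVm hCI
    -- snoc identities
    have hsnocX : ∀ ω, (Fin.snoc (fun j : Fin m => X j ω) (X m ω)
        : Π j : Fin (m+1), 𝒳 j) = fun j : Fin (m+1) => X j ω := by
      intro ω
      funext j
      induction j using Fin.lastCases with
      | last => simp only [Fin.snoc_last]; rfl
      | cast j => simp only [Fin.snoc_castSucc]; rfl
    have hsnocY : ∀ ω, (Fin.snoc (fun j : Fin m => Y j ω) (Y m ω)
        : Π j : Fin (m+1), 𝒴 j) = fun j : Fin (m+1) => Y j ω := by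
      intro ω
      funext j
      induction j using Fin.lastCases with
      | last => simp only [Fin.snoc_last]; rfl
      | cast j => simp only [Fin.snoc_castSucc]; rfl
    -- Step (*): the law of (X^{m+1}, Y^m)
    have L2 : μ.map (fun ω => ((fun j : Fin (m+1) => X j ω), (fun j : Fin m => Y j ω)))
        = (μ.map (fun ω (j : Fin (m+1)) => X j ω)) ⊗ₘ
            ((causalKer κcd m).comap (fun x j => x j.castSucc) (measurable_init m)) := by
      haveI : IsProbabilityMeasure
          (μ.map (fun ω => ((fun j : Fin (m+1) => X j ω), (fun j : Fin m => Y j ω)))) :=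
        Measure.isProbabilityMeasure_map (hXv1.prodMk hVm).aemeasurable
      refine measure_ext_prod fun S T hS hT => ?_
      have hS' : MeasurableSet ((fun p : (Π j : Fin m, 𝒳 j) × 𝒳 m =>
          (Fin.snoc p.1 p.2 : Π j : Fin (m+1), 𝒳 j)) ⁻¹' S) := (measurable_snoc m) hS
      rw [Measure.map_apply (hXv1.prodMk hVm) (hS.prod hT)]
      have hpre1 : (fun ω => ((fun j : Fin (m+1) => X j ω), (fun j : Fin m => Y j ω)))
            ⁻¹' (S ×ˢ T)
          = (fun ω => (((fun j : Fin m => X j ω), X m ω), (fun j : Fin m => Y j ω)))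
            ⁻¹' (((fun p : (Π j : Fin m, 𝒳 j) × 𝒳 m =>
              (Fin.snoc p.1 p.2 : Π j : Fin (m+1), 𝒳 j)) ⁻¹' S) ×ˢ T) := by
        ext ω
        simp only [Set.mem_preimage, Set.mem_prod]
        rw [hsnocX ω]
      rw [hpre1, ← Measure.map_apply ((hUm.prodMk (hX m)).prodMk hVm) (hS'.prod hT), ECI,
        Measure.compProd_apply_prod hS' hT]
      simp only [Kernel.comap_apply]
      have hf1 : Measurable (fun p : (Π j : Fin m, 𝒳 j) × 𝒳 m =>
          condDistrib (fun ω (j : Fin m) => Y j ω) (fun ω (j : Fin m) => X j ω) μ p.1 T) :=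
        (Kernel.measurable_coe _ hT).comp measurable_fst
      rw [setLIntegral_map hS' hf1 (hUm.prodMk (hX m))]
      rw [Measure.compProd_apply_prod hS hT]
      simp only [Kernel.comap_apply]
      have hf2 : Measurable (fun x : Π j : Fin (m+1), 𝒳 j =>
          causalKer κcd m (fun j : Fin m => x j.castSucc) T) :=
        (Kernel.measurable_coe _ hT).comp (measurable_init m)
      rw [setLIntegral_map hS hf2 hXv1]
      have hseteq : (fun ω => ((fun j : Fin m => X j ω), X m ω)) ⁻¹'
            ((fun p : (Π j : Fin m, 𝒳 j) × 𝒳 m =>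
              (Fin.snoc p.1 p.2 : Π j : Fin (m+1), 𝒳 j)) ⁻¹' S)
          = (fun ω (j : Fin (m+1)) => X j ω) ⁻¹' S := by
        ext ω
        simp only [Set.mem_preimage]
        rw [hsnocX ω]
      rw [hseteq]
      have hae' : ∀ᵐ ω ∂μ, causalKer κcd m (fun j : Fin m => X j ω)
          = condDistrib (fun ω (j : Fin m) => Y j ω) (fun ω (j : Fin m) => X j ω) μ
              (fun j : Fin m => X j ω) := ae_of_ae_map hUm.aemeasurable hae
      refine lintegral_congr_ae (ae_restrict_of_ae (hae'.mono fun ω hω => ?_))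
      show condDistrib (fun ω (j : Fin m) => Y j ω) (fun ω (j : Fin m) => X j ω) μ
          (fun j : Fin m => X j ω) T = causalKer κcd m (fun j : Fin m => X j ω) T
      rw [← hω]
    -- Now the inductive step, by extensionality.
    haveI : IsProbabilityMeasure
        (μ.map (fun ω => ((fun j : Fin (m+1) => X j ω), (fun j : Fin (m+1) => Y j ω)))) :=
      Measure.isProbabilityMeasure_map (hXv1.prodMk hYv1).aemeasurable
    ext s hs
    -- RHS
    have hgmeas : Measurable (fun p : (Π j : Fin (m+1), 𝒳 j) × (Π j : Fin m, 𝒴 j) =>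
        κcd m (p.2, p.1) {z | (p.1, (Fin.snoc p.2 z : Π j : Fin (m+1), 𝒴 j)) ∈ s}) := by
      have hD : MeasurableSet {q : ((Π j : Fin (m+1), 𝒳 j) × (Π j : Fin m, 𝒴 j)) × 𝒴 m |
          (q.1.1, (Fin.snoc q.1.2 q.2 : Π j : Fin (m+1), 𝒴 j)) ∈ s} := by
        refine (measurable_fst.comp measurable_fst).prodMk
          ((measurable_snoc m).comp (((measurable_snd.comp measurable_fst)).prodMk
            measurable_snd)) hs
      exact Kernel.measurable_kernel_prodMk_left
        (κ := (κcd m).comap Prod.swap measurable_swap) hD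
    rw [Measure.compProd_apply hs]
    have hsec : ∀ x, causalKer κcd (m+1) x (Prod.mk x ⁻¹' s)
        = ∫⁻ y, κcd m (y, x) {z | (x, (Fin.snoc y z : Π j : Fin (m+1), 𝒴 j)) ∈ s}
            ∂(causalKer κcd m (fun j => x j.castSucc)) := by
      intro x
      exact causalKer_succ_apply κcd m x (measurable_prodMk_left hs)
    rw [lintegral_congr hsec]
    have hrhs : ∫⁻ x, (∫⁻ y, κcd m (y, x) {z | (x, (Fin.snoc y z : Π j : Fin (m+1), 𝒴 j)) ∈ s}
            ∂(causalKer κcd m (fun j => x j.castSucc)))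
          ∂(μ.map (fun ω (j : Fin (m+1)) => X j ω))
        = ∫⁻ p, κcd m (p.2, p.1) {z | (p.1, (Fin.snoc p.2 z : Π j : Fin (m+1), 𝒴 j)) ∈ s}
          ∂((μ.map (fun ω (j : Fin (m+1)) => X j ω)) ⊗ₘ
            ((causalKer κcd m).comap (fun x j => x j.castSucc) (measurable_init m))) := by
      rw [Measure.lintegral_compProd hgmeas]
      refine lintegral_congr fun x => ?_
      rw [Kernel.comap_apply]
    rw [hrhs, ← L2, lintegral_map hgmeas (hXv1.prodMk hVm)]
    -- LHS
    rw [Measure.map_apply (hXv1.prodMk hYv1) hs]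
    have hC : MeasurableSet {q : ((Π j : Fin m, 𝒴 j) × (Π j : Fin (m+1), 𝒳 j)) × 𝒴 m |
        (q.1.2, (Fin.snoc q.1.1 q.2 : Π j : Fin (m+1), 𝒴 j)) ∈ s} := by
      refine (measurable_snd.comp measurable_fst).prodMk
        ((measurable_snoc m).comp ((measurable_fst.comp measurable_fst).prodMk
          measurable_snd)) hs
    have hpre : (fun ω => ((fun j : Fin (m+1) => X j ω), (fun j : Fin (m+1) => Y j ω))) ⁻¹' s
        = (fun ω => (((fun j : Fin m => Y j ω), (fun j : Fin (m+1) => X j ω)), Y m ω)) ⁻¹'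
          {q : ((Π j : Fin m, 𝒴 j) × (Π j : Fin (m+1), 𝒳 j)) × 𝒴 m |
            (q.1.2, (Fin.snoc q.1.1 q.2 : Π j : Fin (m+1), 𝒴 j)) ∈ s} := by
      ext ω
      simp only [Set.mem_preimage, Set.mem_setOf_eq]
      rw [hsnocY ω]
    rw [hpre, measure_preimage_pair_eq_lintegral_condDistrib μ hWm (hY m) hC]
    rfl

end main

/-- If for each `i < n` the Markov chain `Y^i ↔ X^i ↔ X_{i+1}` holds
(`Y^i` conditionally independent of `X_{i+1}` given `X^i`), then the regular conditional
distribution of `Y^n` given `X^n` factorizes causally: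
`P_{Y^n|X^n}(dy^n|x^n) = ⊗_{i=0}^n P_{Y_i|Y^{i-1},X^i}(dy_i|y^{i-1},x^i)` for
`P_{X^n}`-almost all `x^n`. -/
theorem stmt2
    {Ω : Type*} [MeasurableSpace Ω] [StandardBorelSpace Ω] [Nonempty Ω]
    (μ : Measure Ω) [IsProbabilityMeasure μ]
    {𝒳 𝒴 : ℕ → Type*}
    [∀ i, MeasurableSpace (𝒳 i)] [∀ i, TopologicalSpace (𝒳 i)]
    [∀ i, PolishSpace (𝒳 i)] [∀ i, BorelSpace (𝒳 i)]
    [∀ i, MeasurableSpace (𝒴 i)] [∀ i, TopologicalSpace (𝒴 i)]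
    [∀ i, PolishSpace (𝒴 i)] [∀ i, BorelSpace (𝒴 i)] [∀ i, Nonempty (𝒴 i)]
    (n : ℕ) (X : (i : ℕ) → Ω → 𝒳 i) (Y : (i : ℕ) → Ω → 𝒴 i)
    (hX : ∀ i, Measurable (X i)) (hY : ∀ i, Measurable (Y i))
    -- hypothesis: `Y^i ↔ X^i ↔ X_{i+1}` for every `i < n`
    (hMC : ∀ i < n,
      CondIndepFun
        (MeasurableSpace.comap (fun ω (j : Fin (i + 1)) => X j ω) inferInstance)
        ((measurable_pi_lambda _ fun j : Fin (i + 1) => hX j).comap_le)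
        (fun ω (j : Fin (i + 1)) => Y j ω) (X (i + 1)) μ) :
    -- conclusion: causal factorization of the regular conditional distribution
    ∀ᵐ x ∂(μ.map (fun ω (j : Fin (n + 1)) => X j ω)),
      condDistrib (fun ω (j : Fin (n + 1)) => Y j ω) (fun ω (j : Fin (n + 1)) => X j ω) μ x
        = causalProd
            (fun i => condDistrib (Y i)
              (fun ω => ((fun j : Fin i => Y j ω), (fun j : Fin (i + 1) => X j ω))) μ)
            (n + 1) x := by
  have hXv : Measurable (fun ω (j : Fin (n+1)) => X j ω) :=
    measurable_pi_lambda _ fun j => hX j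
  have hYv : Measurable (fun ω (j : Fin (n+1)) => Y j ω) :=
    measurable_pi_lambda _ fun j => hY j
  have hmain := main_induction μ n X Y hX hY hMC (n+1) le_rfl
  have h := (condDistrib_ae_eq_of_measure_eq_compProd_of_measurable hXv hYv hmain).symm
  filter_upwards [h] with x hx
  rw [← hx, causalKer_apply]
end

section
/- Let 0 < p < 1, 0 < q < 1, and let (X_{i-1}, X_i) be a {0,1}²-valued random pair with the stationary joint distribution P(0,0) = (1−p)q/(p+q), P(1,0) = P(0,1) = pq/(p+q), P(1,1) = p(1−q)/(p+q) (first coordinate x_i, second x_{i-1}). Define the distortion d(x_i, x_{i-1}, y) = 1 if y ≠ 1_{x_i = x_{i-1} = 1} and 0 otherwise, and set θ := p(1−q)/(p+q), D_max := min(θ, 1−θ) = min(p(1−q)/(p+q), q(1+p)/(p+q)). Then for every 0 ≤ D ≤ D_max and every {0,1}-valued random variable Y jointly distributed with (X_{i-1},X_i) (i.e., every conditional pmf P(y|x_i,x_{i-1})) satisfying E[d(X_i, X_{i-1}, Y)] ≤ D, the mutual information satisfies I((X_{i-1},X_i); Y) ≥ H_b(q(1+p)/(p+q)) − H_b(D).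 -/
/-- The stationary joint pmf of the consecutive pair `(X_i, X_{i-1})` of the binary Markov
source (first coordinate `x_i`, second `x_{i-1}`). -/
noncomputable def pairP (p q : ℝ) : Fin 2 × Fin 2 → ℝ := fun x =>
  if x = (0, 0) then (1 - p) * q / (p + q)
  else if x = (1, 1) then p * (1 - q) / (p + q)
  else p * q / (p + q)

/-- The distortion `d(x_i, x_{i-1}, y)`: the Hamming distance between `y` and the indicator
`1_{x_i = x_{i-1} = 1}`. -/
def dH : Fin 2 × Fin 2 → Fin 2 → ℝ := fun x y =>
  if y = (if x = (1, 1) then 1 else 0) then 0 else 1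

/-- The expected distortion `E[d(X_i, X_{i-1}, Y)]` of a conditional pmf `W`. -/
noncomputable def expDist (p q : ℝ) (W : Fin 2 × Fin 2 → Fin 2 → ℝ) : ℝ :=
  ∑ x, ∑ y, pairP p q x * W x y * dH x y

/-- The output pmf of `Y` induced by the conditional pmf `W`. -/
noncomputable def outP (p q : ℝ) (W : Fin 2 × Fin 2 → Fin 2 → ℝ) (y : Fin 2) : ℝ :=
  ∑ x, pairP p q x * W x y

/-- The mutual information `I((X_{i-1}, X_i); Y)` (in bits) induced by the conditional
pmf `W`. -/
noncomputable def mutI (p q : ℝ) (W : Fin 2 × Fin 2 → Fin 2 → ℝ) : ℝ :=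
  ∑ x, ∑ y, pairP p q x * W x y *
    Real.logb 2 ((pairP p q x * W x y) / (pairP p q x * outP p q W y))

/-- The binary entropy function (base 2), with `H_b 0 = H_b 1 = 0`. -/
noncomputable def binEnt (t : ℝ) : ℝ :=
  -(t * Real.logb 2 t) - (1 - t) * Real.logb 2 (1 - t)

lemma gibbs_aux {ι : Type*} [Fintype ι] (a b : ι → ℝ)
    (ha : ∀ i, 0 ≤ a i) (hb : ∀ i, 0 ≤ b i) (hab : ∀ i, b i = 0 → a i = 0)
    (hsum : ∑ i, a i = ∑ i, b i) :
    0 ≤ ∑ i, a i * Real.log (a i / b i) := by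
  have key : ∀ i, a i - b i ≤ a i * Real.log (a i / b i) := by
    intro i
    rcases eq_or_lt_of_le (ha i) with h | h
    · simp only [← h, zero_mul, zero_sub, neg_nonpos]
      exact hb i
    · have hbi : 0 < b i := lt_of_le_of_ne (hb i) (fun e => by simp [hab i e.symm] at h)
      have hlog : Real.log (b i / a i) ≤ b i / a i - 1 :=
        Real.log_le_sub_one_of_pos (by positivity)
      have h2 : Real.log (a i / b i) = - Real.log (b i / a i) := by
        rw [← Real.log_inv]; congr 1; field_simp
      rw [h2]
      have hba : a i * (b i / a i) = b i := by field_simp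
      nlinarith [mul_le_mul_of_nonneg_left hlog h.le]
  calc (0:ℝ) = ∑ i, (a i - b i) := by rw [Finset.sum_sub_distrib, hsum]; ring
  _ ≤ _ := Finset.sum_le_sum (fun i _ => key i)

lemma binEnt_eq (t : ℝ) : binEnt t = Real.binEntropy t / Real.log 2 := by
  unfold binEnt Real.binEntropy Real.logb
  rw [Real.log_inv, Real.log_inv]
  ring

set_option maxHeartbeats 2000000 in
/-- (Converse part.) For the stationary binary Markov pair source with
Hamming-type distortion toward the indicator of two consecutive ones, every conditional pmf
`W` with expected distortion at most `D ≤ D_max` has mutual information at least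
`H_b(q(1+p)/(p+q)) − H_b(D)`. -/
theorem stmt12 (p q : ℝ) (hp0 : 0 < p) (hp1 : p < 1) (hq0 : 0 < q) (hq1 : q < 1)
    (W : Fin 2 × Fin 2 → Fin 2 → ℝ)
    (hW0 : ∀ x y, 0 ≤ W x y) (hW1 : ∀ x, ∑ y, W x y = 1)
    (D : ℝ) (hD0 : 0 ≤ D)
    (hDmax : D ≤ min (p * (1 - q) / (p + q)) (q * (1 + p) / (p + q)))
    (hdist : expDist p q W ≤ D) :
    binEnt (q * (1 + p) / (p + q)) - binEnt D ≤ mutI p q W := by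
  have hs : 0 < p + q := by linarith
  set θ : ℝ := p * (1 - q) / (p + q) with hθdef
  have hθ0 : 0 < θ := by rw [hθdef]; exact div_pos (by nlinarith) hs
  have hθ1 : θ < 1 := by
    rw [hθdef, div_lt_one hs]; nlinarith
  have hcompl : q * (1 + p) / (p + q) = 1 - θ := by
    rw [hθdef]; field_simp; ring
  have hD2 : D ≤ 1 / 2 := by
    rcases le_total θ (1/2) with h | h
    · exact le_trans (le_trans hDmax (min_le_left _ _)) h
    · refine le_trans (le_trans hDmax (min_le_right _ _)) ?_
      rw [hcompl]; linarith
  have hD1 : D < 1 := by linarith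
  -- positivity of pairP
  have hP : ∀ x : Fin 2 × Fin 2, 0 < pairP p q x := by
    intro x
    fin_cases x <;> simp [pairP] <;> exact div_pos (by nlinarith) hs
  -- the "Z-marginal" pmf
  set PZ : Fin 2 × Fin 2 → ℝ := fun x => if x = (1, 1) then θ else 1 - θ with hPZdef
  have hPZpos : ∀ x, 0 < PZ x := by
    intro x; rw [hPZdef]; dsimp only
    split <;> [exact hθ0; linarith]
  -- the test channel
  set V : Fin 2 × Fin 2 → Fin 2 → ℝ := fun x y =>
    (pairP p q x / PZ x) * (if y = (if x = (1, 1) then 1 else 0) then 1 - D else D)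
    with hVdef
  have hV0 : ∀ x y, 0 ≤ V x y := by
    intro x y; rw [hVdef]; dsimp only
    have := (hP x).le
    have := (hPZpos x).le
    refine mul_nonneg (div_nonneg (hP x).le (hPZpos x).le) ?_
    split <;> split <;> linarith
  -- each distortion term is at most D
  have hterm : ∀ x y, pairP p q x * W x y * dH x y ≤ D := by
    intro x y
    refine le_trans ?_ hdist
    unfold expDist
    have h1 : pairP p q x * W x y * dH x y ≤ ∑ y', pairP p q x * W x y' * dH x y' := by
      refine Finset.single_le_sum (f := fun y' => pairP p q x * W x y' * dH x y') ?_ (Finset.mem_univ y)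
      intro i _
      have : (0:ℝ) ≤ dH x i := by unfold dH; split <;> split <;> norm_num
      have := (hP x).le
      have := hW0 x i
      positivity
    refine le_trans h1 ?_
    refine Finset.single_le_sum (f := fun x' => ∑ y', pairP p q x' * W x' y' * dH x' y') ?_ (Finset.mem_univ x)
    intro i _
    refine Finset.sum_nonneg fun j _ => ?_
    have : (0:ℝ) ≤ dH i j := by unfold dH; split <;> split <;> norm_num
    have := (hP i).le
    have := hW0 i j
    positivity
  -- each joint prob is at most the output prob
  have haQ : ∀ x y, pairP p q x * W x y ≤ outP p q W y := by
    intro x y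
    unfold outP
    refine Finset.single_le_sum (f := fun x' => pairP p q x' * W x' y) ?_ (Finset.mem_univ x)
    intro i _
    have := (hP i).le; have := hW0 i y
    positivity
  have hQ0 : ∀ y, 0 ≤ outP p q W y := by
    intro y
    refine Finset.sum_nonneg fun i _ => ?_
    have := (hP i).le; have := hW0 i y
    positivity
  -- the test channel is a pmf
  have hVsum : ∀ y, ∑ x, V x y = 1 := by
    intro y
    have h1θ : (1:ℝ) - θ ≠ 0 := by linarith
    have hθne : θ ≠ 0 := ne_of_gt hθ0
    have hne1 : p - p * q ≠ 0 := by nlinarith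
    have hne2 : p * q + q ≠ 0 := by nlinarith
    fin_cases y
    · simp only [hVdef, hPZdef, Fintype.sum_prod_type, Fin.sum_univ_two, pairP]
      norm_num
      rw [hθdef]
      have hq1' : (1:ℝ) - q ≠ 0 := by linarith
      have hpq : p + q ≠ 0 := by linarith
      have hne3 : q + q * p ≠ 0 := by nlinarith
      have hne4 : -(q * p) + p ≠ 0 := by nlinarith
      field_simp
      have k : q * (q + q * p)⁻¹ * (1 + p) = 1 := by
        rw [show q * (q + q * p)⁻¹ * (1 + p) = (q + q * p) * (q + q * p)⁻¹ by ring]; exact mul_inv_cancel₀ hne3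
      linear_combination (1 - D) * k
    · simp only [hVdef, hPZdef, Fintype.sum_prod_type, Fin.sum_univ_two, pairP]
      norm_num
      rw [hθdef]
      have hq1' : (1:ℝ) - q ≠ 0 := by linarith
      have hpq : p + q ≠ 0 := by linarith
      have hne3 : q + q * p ≠ 0 := by nlinarith
      have hne4 : -(q * p) + p ≠ 0 := by nlinarith
      field_simp
      have k : q * (q + q * p)⁻¹ * (1 + p) = 1 := by
        rw [show q * (q + q * p)⁻¹ * (1 + p) = (q + q * p) * (q + q * p)⁻¹ by ring]; exact mul_inv_cancel₀ hne3
      linear_combination D * k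
  -- natural-log mutual information
  set Inat : ℝ := ∑ x, ∑ y, pairP p q x * W x y *
      Real.log ((pairP p q x * W x y) / (pairP p q x * outP p q W y)) with hInat
  -- natural-log lower bound sum
  set S : ℝ := ∑ x, ∑ y, pairP p q x * W x y * Real.log (V x y / pairP p q x) with hS
  set E : ℝ := expDist p q W with hE
  have hE0 : 0 ≤ E := by
    rw [hE]; unfold expDist
    refine Finset.sum_nonneg fun i _ => Finset.sum_nonneg fun j _ => ?_
    have : (0:ℝ) ≤ dH i j := by unfold dH; split <;> split <;> norm_num
    have := (hP i).le; have := hW0 i j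
    positivity
  -- Step 1 : S ≤ Inat  (Gibbs)
  have step1 : S ≤ Inat := by
    rw [← sub_nonneg]
    have hrw : Inat - S = ∑ y, ∑ x, (pairP p q x * W x y) *
        Real.log ((pairP p q x * W x y) / (outP p q W y * V x y)) := by
      rw [Finset.sum_comm, hInat, hS, ← Finset.sum_sub_distrib]
      refine Finset.sum_congr rfl fun x _ => ?_
      rw [← Finset.sum_sub_distrib]
      refine Finset.sum_congr rfl fun y _ => ?_
      rcases eq_or_lt_of_le (mul_nonneg (hP x).le (hW0 x y)) with ht | ht
      · rw [← ht]; ring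
      · -- positive term: logs split
        have hPx := hP x
        have hQy : 0 < outP p q W y := lt_of_lt_of_le ht (haQ x y)
        have hVxy : 0 < V x y := by
          rw [hVdef]; dsimp only
          refine mul_pos (div_pos hPx (hPZpos x)) ?_
          by_cases hm : y = (if x = (1, 1) then (1 : Fin 2) else 0)
          · rw [if_pos hm]; linarith
          · rw [if_neg hm]
            have h2 := hterm x y
            unfold dH at h2
            rw [if_neg hm, mul_one] at h2
            linarith
        rw [Real.log_div (ne_of_gt ht) (by positivity),
            Real.log_div (ne_of_gt hVxy) (ne_of_gt hPx),
            Real.log_div (ne_of_gt ht) (by positivity),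
            Real.log_mul (ne_of_gt hPx) (ne_of_gt hQy),
            Real.log_mul (ne_of_gt hQy) (ne_of_gt hVxy)]
        ring
    rw [hrw]
    refine Finset.sum_nonneg fun y _ => ?_
    refine gibbs_aux (fun x => pairP p q x * W x y) (fun x => outP p q W y * V x y)
      (fun x => mul_nonneg (hP x).le (hW0 x y))
      (fun x => mul_nonneg (hQ0 y) (hV0 x y)) ?_ ?_
    · intro x hbx
      show pairP p q x * W x y = 0
      rcases mul_eq_zero.mp hbx with hq0' | hv0
      · have h3 := haQ x y
        rw [hq0'] at h3
        have h4 := mul_nonneg (hP x).le (hW0 x y)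
        linarith
      · -- V x y = 0
        rw [hVdef] at hv0; dsimp only at hv0
        rcases mul_eq_zero.mp hv0 with h' | h'
        · exact absurd h' (ne_of_gt (div_pos (hP x) (hPZpos x)))
        · by_cases hm : y = (if x = (1, 1) then (1 : Fin 2) else 0)
          · rw [if_pos hm] at h'
            linarith
          · rw [if_neg hm] at h'
            have h2 := hterm x y
            unfold dH at h2
            rw [if_neg hm, mul_one] at h2
            rw [h'] at h2
            have := mul_nonneg (hP x).le (hW0 x y)
            linarith
    · rw [← Finset.mul_sum, hVsum y, mul_one]
      rfl
  -- Step 2 : evaluate S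
  have step2 : S = Real.binEntropy θ + E * Real.log D + (1 - E) * Real.log (1 - D) := by
    have htermwise : ∀ x y, pairP p q x * W x y * Real.log (V x y / pairP p q x)
        = pairP p q x * W x y *
            (dH x y * Real.log D + (1 - dH x y) * Real.log (1 - D) - Real.log (PZ x)) := by
      intro x y
      rcases eq_or_lt_of_le (mul_nonneg (hP x).le (hW0 x y)) with ht | ht
      · rw [← ht]; ring
      · have hPx := hP x
        have hgen : ∀ (c P Z : ℝ), P ≠ 0 → (P / Z * c) / P = c / Z := by
          intro c P Z hPne
          rcases eq_or_ne Z 0 with rfl | hZ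
          · simp
          · field_simp
        have hVP : V x y / pairP p q x
            = (if y = (if x = (1, 1) then 1 else 0) then 1 - D else D) / PZ x := by
          rw [hVdef]; dsimp only
          exact hgen _ _ _ (ne_of_gt hPx)
        rw [hVP]
        unfold dH
        by_cases hm : y = (if x = (1, 1) then 1 else 0)
        · rw [if_pos hm, if_pos hm,
              Real.log_div (by linarith : (1:ℝ) - D ≠ 0) (ne_of_gt (hPZpos x))]
          ring
        · have hDpos : 0 < D := by
            have h2 := hterm x y
            unfold dH at h2
            rw [if_neg hm] at h2
            nlinarith
          rw [if_neg hm, if_neg hm,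
              Real.log_div (ne_of_gt hDpos) (ne_of_gt (hPZpos x))]
          ring
    rw [hS]
    calc (∑ x, ∑ y, pairP p q x * W x y * Real.log (V x y / pairP p q x))
        = ∑ x, ∑ y, pairP p q x * W x y *
            (dH x y * Real.log D + (1 - dH x y) * Real.log (1 - D) - Real.log (PZ x)) := by
          exact Finset.sum_congr rfl fun x _ => Finset.sum_congr rfl fun y _ => htermwise x y
      _ = Real.binEntropy θ + E * Real.log D + (1 - E) * Real.log (1 - D) := by
          have hW1' : ∀ x : Fin 2 × Fin 2, W x 1 = 1 - W x 0 := by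
            intro x
            have h := hW1 x
            rw [Fin.sum_univ_two] at h
            linarith
          have hBE : Real.binEntropy θ = -(θ * Real.log θ) - (1 - θ) * Real.log (1 - θ) := by
            unfold Real.binEntropy
            rw [Real.log_inv, Real.log_inv]; ring
          have hP11 : pairP p q (1, 1) = θ := by simp [pairP, hθdef]
          have hPrest : pairP p q (0, 0) + pairP p q (0, 1) + pairP p q (1, 0) = 1 - θ := by
            simp only [pairP]
            norm_num
            rw [hθdef, eq_sub_iff_add_eq, ← add_div, ← add_div,
              ← add_div, div_eq_one_iff_eq (ne_of_gt hs)]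
            ring
          rw [hE]
          unfold expDist
          simp only [hPZdef, Fintype.sum_prod_type, Fin.sum_univ_two, dH]
          norm_num
          rw [hBE]
          have hPrest' : pairP p q 0 + pairP p q (0, 1) + pairP p q (1, 0) = 1 - θ := hPrest
          have hP11' : pairP p q 1 = θ := hP11
          rw [hW1' (0, 0), hW1' (0, 1), hW1' (1, 0), hW1' (1, 1), hP11]
          linear_combination (Real.log (1 - D) - Real.log (1 - θ)) * hPrest
  -- Step 3 : compare with binEntropy D
  have step3 : Real.binEntropy θ - Real.binEntropy D ≤ S := by
    rw [step2]
    have hBD : Real.binEntropy D = -(D * Real.log D) - (1 - D) * Real.log (1 - D) := by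
      unfold Real.binEntropy
      rw [Real.log_inv, Real.log_inv]; ring
    rw [hBD]
    have key : 0 ≤ (D - E) * (Real.log (1 - D) - Real.log D) := by
      rcases eq_or_lt_of_le hD0 with h | h
      · have hE' : E = 0 := le_antisymm (h ▸ hdist) hE0
        rw [← h, hE']; norm_num
      · refine mul_nonneg (by linarith [hdist]) ?_
        have : Real.log D ≤ Real.log (1 - D) := Real.log_le_log h (by linarith)
        linarith
    nlinarith [key]
  -- Conversion to base 2
  have hlog2 : 0 < Real.log 2 := Real.log_pos (by norm_num)
  have hmutI : mutI p q W = Inat / Real.log 2 := by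
    rw [hInat]
    unfold mutI Real.logb
    simp only [Finset.sum_div, mul_div_assoc]
  rw [hmutI, hcompl, binEnt_eq, binEnt_eq, Real.binEntropy_one_sub, div_sub_div_same]
  apply div_le_div_of_nonneg_right ?_ hlog2.le
  exact le_trans step3 step1
end

section
/- Let 0 < p < 1, 0 < q < 1, and let (X_{i-1}, X_i) have the stationary pair distribution P(0,0) = (1−p)q/(p+q), P(1,0) = P(0,1) = pq/(p+q), P(1,1) = p(1−q)/(p+q), with distortion d(x_i, x_{i-1}, y) = 1 if y ≠ 1_{x_i = x_{i-1} = 1} and 0 otherwise, and D_max := min( q(1+p)/(p+q), p(1−q)/(p+q) ). Then the single-letter causal rate distortion function R^c(D) := min { I((X_{i-1},X_i); Y) : P(y|x_i,x_{i-1}) a conditional pmf with E[d(X_i,X_{i-1},Y)] ≤ D } satisfies R^c(D) = H_b(q(1+p)/(p+q)) − H_b(D) for 0 ≤ D ≤ D_max, and R^c(D) = 0 for D > D_max. -/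
open Real Finset

lemma gibbs_term (a m : ℝ) (ha : 0 ≤ a) (hm : 0 ≤ m) (h0 : m = 0 → a = 0) :
    a - m ≤ a * Real.log (a / m) := by
  rcases eq_or_lt_of_le ha with h | h
  · rw [← h]; simp; linarith
  · have hm0 : 0 < m := by
      rcases eq_or_lt_of_le hm with h' | h'
      · exfalso; have := h0 h'.symm; linarith
      · exact h'
    have h1 : Real.log (m / a) ≤ m / a - 1 := Real.log_le_sub_one_of_pos (by positivity)
    have h2 : Real.log (a / m) = - Real.log (m / a) := by
      rw [← Real.log_inv]; congr 1; field_simp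
    have h3 : a * (m / a - 1) = m - a := by field_simp
    nlinarith [mul_le_mul_of_nonneg_left h1 h.le]

lemma gibbs {ι : Type*} [Fintype ι] (f g : ι → ℝ) (hf : ∀ i, 0 ≤ f i)
    (hg : ∀ i, 0 ≤ g i) (h0 : ∀ i, g i = 0 → f i = 0)
    (hs : ∑ i, g i ≤ ∑ i, f i) :
    0 ≤ ∑ i, f i * Real.logb 2 (f i / g i) := by
  have h1 : ∑ i, (f i - g i) ≤ ∑ i, f i * Real.log (f i / g i) :=
    Finset.sum_le_sum fun i _ => gibbs_term _ _ (hf i) (hg i) (h0 i)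
  rw [Finset.sum_sub_distrib] at h1
  have h2 : 0 ≤ ∑ i, f i * Real.log (f i / g i) := by linarith
  have h3 : ∑ i, f i * Real.logb 2 (f i / g i)
      = (∑ i, f i * Real.log (f i / g i)) / Real.log 2 := by
    rw [Finset.sum_div]
    refine Finset.sum_congr rfl fun i _ => ?_
    rw [Real.logb]; ring
  rw [h3]
  exact div_nonneg h2 (Real.log_nonneg one_le_two)

lemma term_eval (Px Wv o ρ : ℝ) (hP : Px ≠ 0) (ho : 0 ≤ o) (h : Wv = ρ * o) :
    Px * Wv * Real.logb 2 (Px * Wv / (Px * o)) = Px * Wv * Real.logb 2 ρ := by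
  rcases eq_or_lt_of_le ho with h0 | h0
  · rw [h, ← h0]; simp
  · congr 2
    rw [h]; field_simp

lemma mul_logb_div (c y z : ℝ) (hz : z ≠ 0) (hy : y = 0 → c = 0) :
    c * Real.logb 2 (y / z) = c * Real.logb 2 y - c * Real.logb 2 z := by
  rcases eq_or_ne y 0 with h | h
  · simp [hy h]
  · rw [Real.logb_div h hz]; ring

lemma stepB (α D a b L1 LD La Lb : ℝ) (hkey : α*(1-2*D) = a - D) (hab : a + b = 1) :
    α*(1-D)*(L1-La) + α*D*(LD-Lb) + (1-α)*D*(LD-La) + (1-α)*(1-D)*(L1-Lb)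
      = (-(b*Lb) - a*La) - (-(D*LD) - (1-D)*L1) := by
  linear_combination (Lb - La) * hkey + Lb * hab

lemma pairP00 (p q : ℝ) : pairP p q (0,0) = (1-p)*q/(p+q) := by simp [pairP]
lemma pairP01 (p q : ℝ) : pairP p q (0,1) = p*q/(p+q) := by simp [pairP]
lemma pairP10 (p q : ℝ) : pairP p q (1,0) = p*q/(p+q) := by simp [pairP]
lemma pairP11 (p q : ℝ) : pairP p q (1,1) = p*(1-q)/(p+q) := by simp [pairP]

lemma pairP0 (p q : ℝ) : pairP p q 0 = (1-p)*q/(p+q) := pairP00 p q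
lemma pairP1 (p q : ℝ) : pairP p q 1 = p*(1-q)/(p+q) := pairP11 p q

lemma pairP_pos {p q : ℝ} (hp0 : 0 < p) (hp1 : p < 1) (hq0 : 0 < q) (hq1 : q < 1) :
    ∀ x, 0 < pairP p q x := by
  intro x
  fin_cases x <;> simp [pairP] <;> refine div_pos (by nlinarith) (by linarith)

/-- the weight of the class of `x` -/
noncomputable def PWf (a b : ℝ) : Fin 2 × Fin 2 → ℝ := fun x => if x = (1,1) then a else b

/-- the comparison reverse-channel factor -/
noncomputable def ggf (D : ℝ) : Fin 2 × Fin 2 → Fin 2 → ℝ := fun x y =>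
  if y = (if x = (1, 1) then 1 else 0) then 1 - D else D

/-- the comparison joint distribution -/
noncomputable def mmf (p q a b D : ℝ) (W : Fin 2 × Fin 2 → Fin 2 → ℝ) :
    Fin 2 × Fin 2 → Fin 2 → ℝ := fun x y =>
  pairP p q x * outP p q W y * ggf D x y / PWf a b x

lemma converse (p q : ℝ) (hp0 : 0 < p) (hp1 : p < 1) (hq0 : 0 < q) (hq1 : q < 1)
    (D : ℝ) (hD0 : 0 ≤ D) (hDb : D ≤ q*(1+p)/(p+q)) (hDa : D ≤ p*(1-q)/(p+q))
    (W : Fin 2 × Fin 2 → Fin 2 → ℝ) (hW0 : ∀ x y, 0 ≤ W x y)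
    (hW1 : ∀ x, ∑ y, W x y = 1) (hE : expDist p q W ≤ D) :
    binEnt (q*(1+p)/(p+q)) - binEnt D ≤ mutI p q W := by
  have hpq : 0 < p + q := by linarith
  obtain ⟨a, ha_def⟩ : ∃ a : ℝ, p*(1-q)/(p+q) = a := ⟨_, rfl⟩
  obtain ⟨b, hb_def⟩ : ∃ b : ℝ, q*(1+p)/(p+q) = b := ⟨_, rfl⟩
  rw [ha_def] at hDa
  rw [hb_def] at hDb
  rw [hb_def]
  have ha : 0 < a := by rw [← ha_def]; refine div_pos (by nlinarith) hpq
  have hb : 0 < b := by rw [← hb_def]; refine div_pos (by nlinarith) hpq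
  have hab : a + b = 1 := by rw [← ha_def, ← hb_def]; field_simp; ring
  have hD2 : 2 * D ≤ 1 := by linarith
  have hD1 : 1 - D > 0 := by linarith
  have hP := pairP_pos hp0 hp1 hq0 hq1 (p := p) (q := q)
  have hP11 : pairP p q (1,1) = a := by rw [pairP11 p q, ha_def]
  have hP3 : pairP p q (0,0) + pairP p q (0,1) + pairP p q (1,0) = b := by
    rw [pairP00, pairP01, pairP10, ← hb_def]; field_simp; ring
  have hW01 : ∀ x, W x 0 + W x 1 = 1 := fun x => by
    have := hW1 x; rwa [Fin.sum_univ_two] at this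
  have hout_nonneg : ∀ y, 0 ≤ outP p q W y := fun y =>
    Finset.sum_nonneg fun x _ => mul_nonneg (hP x).le (hW0 x y)
  have hout_zero : ∀ y, outP p q W y = 0 → ∀ x, W x y = 0 := by
    intro y hy x
    have h1 : ∀ x' ∈ Finset.univ, (0:ℝ) ≤ pairP p q x' * W x' y :=
      fun x' _ => mul_nonneg (hP x').le (hW0 x' y)
    have h2 := (Finset.sum_eq_zero_iff_of_nonneg h1).mp hy x (Finset.mem_univ x)
    rcases mul_eq_zero.mp h2 with h | h
    · exact absurd h (hP x).ne'
    · exact h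
  have hPW : ∀ x, 0 < PWf a b x := fun x => by
    simp only [PWf]; split
    · exact ha
    · exact hb
  have hggval : ∀ (x : Fin 2 × Fin 2) (y : Fin 2),
      ggf D x y = if y = (if x = (1, 1) then 1 else 0) then 1 - D else D := fun x y => rfl
  have hgg0 : ∀ x y, 0 ≤ ggf D x y := fun x y => by
    rw [hggval]
    by_cases hy : y = (if x = (1, 1) then 1 else 0)
    · rw [if_pos hy]; linarith
    · rw [if_neg hy]; exact hD0
  have hdH : ∀ x y, dH x y = if y = (if x = (1, 1) then 1 else 0) then (0:ℝ) else 1 := fun x y => rfl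
  have hdH0 : ∀ x y, 0 ≤ dH x y := fun x y => by
    rw [hdH]
    by_cases hy : y = (if x = (1, 1) then 1 else 0)
    · rw [if_pos hy]
    · rw [if_neg hy]; norm_num
  have he0 : 0 ≤ expDist p q W :=
    Finset.sum_nonneg fun x _ => Finset.sum_nonneg fun y _ =>
      mul_nonneg (mul_nonneg (hP x).le (hW0 x y)) (hdH0 x y)
  have he_term : ∀ x y, pairP p q x * W x y * dH x y ≤ expDist p q W := by
    intro x y
    have h1 : pairP p q x * W x y * dH x y ≤ ∑ y', pairP p q x * W x y' * dH x y' :=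
      Finset.single_le_sum (fun y' _ => mul_nonneg (mul_nonneg (hP x).le (hW0 x y')) (hdH0 x y'))
        (Finset.mem_univ y)
    refine h1.trans ?_
    exact Finset.single_le_sum (f := fun x' => ∑ y', pairP p q x' * W x' y' * dH x' y')
      (fun x' _ => Finset.sum_nonneg fun y' _ =>
        mul_nonneg (mul_nonneg (hP x').le (hW0 x' y')) (hdH0 x' y'))
      (Finset.mem_univ x)
  -- W vanishes on mismatch terms when D = 0
  have hmismatch : ∀ x y, ¬ (y = (if x = (1, 1) then 1 else 0)) → 0 < W x y → 0 < D := by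
    intro x y hne hw
    rcases eq_or_lt_of_le hD0 with h0' | h0'
    · exfalso
      have heq : expDist p q W = 0 := le_antisymm (by linarith) he0
      have h1 := he_term x y
      rw [hdH, if_neg hne, heq] at h1
      nlinarith [hP x]
    · exact h0'
  -- the termwise splitting identity
  have hterm : ∀ (x : Fin 2 × Fin 2) (y : Fin 2),
      pairP p q x * W x y * Real.logb 2 ((pairP p q x * W x y) / (pairP p q x * outP p q W y))
      = pairP p q x * W x y * Real.logb 2 ((pairP p q x * W x y) / mmf p q a b D W x y)
        + pairP p q x * W x y * Real.logb 2 (ggf D x y)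
        - pairP p q x * W x y * Real.logb 2 (PWf a b x) := by
    intro x y
    rcases eq_or_lt_of_le (hW0 x y) with hw | hw
    · rw [← hw]; simp
    · have hπ : 0 < pairP p q x * W x y := mul_pos (hP x) hw
      have hout : 0 < outP p q W y := by
        rcases eq_or_lt_of_le (hout_nonneg y) with h | h
        · exfalso; have := hout_zero y h.symm x; linarith
        · exact h
      have hg : 0 < ggf D x y := by
        rw [hggval]
        by_cases hy : y = (if x = (1, 1) then 1 else 0)
        · rw [if_pos hy]; linarith
        · rw [if_neg hy]; exact hmismatch x y hy hw
      have hmm : mmf p q a b D W x y = pairP p q x * outP p q W y * ggf D x y / PWf a b x := rfl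
      rw [hmm]
      have h1 : (pairP p q x * W x y) / (pairP p q x * outP p q W y * ggf D x y / PWf a b x)
          = ((pairP p q x * W x y) / (pairP p q x * outP p q W y)) * (PWf a b x / ggf D x y) := by
        field_simp
      rw [h1, Real.logb_mul (div_pos hπ (mul_pos (hP x) hout)).ne'
          (div_pos (hPW x) hg).ne',
        Real.logb_div (hPW x).ne' hg.ne']
      ring
  -- Gibbs inequality for the comparison measure
  have hsum_f : ∑ x, ∑ y, pairP p q x * W x y = 1 := by
    have h1 : ∀ x : Fin 2 × Fin 2, ∑ y, pairP p q x * W x y = pairP p q x := by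
      intro x; rw [← Finset.mul_sum, hW1 x, mul_one]
    rw [Finset.sum_congr rfl fun x _ => h1 x]
    rw [Fintype.sum_prod_type, Fin.sum_univ_two, Fin.sum_univ_two, Fin.sum_univ_two]
    rw [pairP00, pairP01, pairP10, pairP11]
    field_simp
    ring
  have hout01 : outP p q W 0 + outP p q W 1 = 1 := by
    rw [outP, outP, ← Finset.sum_add_distrib]
    rw [← hsum_f]
    refine Finset.sum_congr rfl fun x _ => ?_
    rw [Fin.sum_univ_two]
  have hsum_m : ∑ x, ∑ y, mmf p q a b D W x y = 1 := by
    have c1 : ¬((0,0) : Fin 2 × Fin 2) = (1,1) := by decide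
    have c2 : ¬((0,1) : Fin 2 × Fin 2) = (1,1) := by decide
    have c3 : ¬((1,0) : Fin 2 × Fin 2) = (1,1) := by decide
    have c4 : ¬(0 : Fin 2) = 1 := by decide
    have c5 : ¬(1 : Fin 2) = 0 := by decide
    simp only [mmf, ggf, PWf, Fintype.sum_prod_type, Fin.sum_univ_two,
      if_neg c1, if_neg c2, if_neg c3, if_neg c4, if_neg c5,
      eq_self_iff_true, if_true]
    have hP3' : pairP p q (0,0) + pairP p q (0,1) + pairP p q (1,0) = b := hP3
    have hP11' : pairP p q (1,1) = a := hP11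
    have hbinv : b * b⁻¹ = 1 := mul_inv_cancel₀ hb.ne'
    have hainv : a * a⁻¹ = 1 := mul_inv_cancel₀ ha.ne'
    linear_combination ((outP p q W 0 * (1-D) + outP p q W 1 * D)/b) * hP3'
      + ((outP p q W 0 * D + outP p q W 1 * (1-D))/a) * hP11' + hout01
      + (outP p q W 0 - outP p q W 0 * D + outP p q W 1 * D) * hbinv
      + (outP p q W 0 * D + outP p q W 1 - outP p q W 1 * D) * hainv
  have hm0 : ∀ z : (Fin 2 × Fin 2) × Fin 2,
      mmf p q a b D W z.1 z.2 = 0 → pairP p q z.1 * W z.1 z.2 = 0 := by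
    rintro ⟨x, y⟩ hz
    simp only at hz ⊢
    have h2 : pairP p q x * outP p q W y * ggf D x y = 0 := by
      have : mmf p q a b D W x y = pairP p q x * outP p q W y * ggf D x y / PWf a b x := rfl
      rw [this, div_eq_zero_iff] at hz
      rcases hz with h | h
      · exact h
      · exact absurd h (hPW x).ne'
    rcases mul_eq_zero.mp h2 with h | h
    · rcases mul_eq_zero.mp h with h' | h'
      · exact absurd h' (hP x).ne'
      · rw [hout_zero y h' x, mul_zero]
    · rw [hggval] at h
      by_cases hy : y = (if x = (1,1) then 1 else 0)
      · rw [if_pos hy] at h; linarith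
      · rw [if_neg hy] at h
        by_contra hc
        have hw : 0 < W x y := by
          rcases eq_or_lt_of_le (hW0 x y) with h'' | h''
          · exact absurd (by rw [← h'', mul_zero]) hc
          · exact h''
        have := hmismatch x y hy hw
        linarith
  have hs : (∑ z : (Fin 2 × Fin 2) × Fin 2, mmf p q a b D W z.1 z.2)
      ≤ ∑ z : (Fin 2 × Fin 2) × Fin 2, pairP p q z.1 * W z.1 z.2 := by
    have e1 : (∑ z : (Fin 2 × Fin 2) × Fin 2, mmf p q a b D W z.1 z.2)
        = ∑ x, ∑ y, mmf p q a b D W x y := Fintype.sum_prod_type _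
    have e2 : (∑ z : (Fin 2 × Fin 2) × Fin 2, pairP p q z.1 * W z.1 z.2)
        = ∑ x, ∑ y, pairP p q x * W x y := Fintype.sum_prod_type _
    rw [e1, e2, hsum_m, hsum_f]
  have hGibbs : 0 ≤ ∑ x, ∑ y, pairP p q x * W x y *
      Real.logb 2 ((pairP p q x * W x y) / mmf p q a b D W x y) := by
    have hg := gibbs (ι := (Fin 2 × Fin 2) × Fin 2)
      (fun z => pairP p q z.1 * W z.1 z.2)
      (fun z => mmf p q a b D W z.1 z.2)
      (fun z => mul_nonneg (hP z.1).le (hW0 z.1 z.2))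
      (fun z => div_nonneg
        (mul_nonneg (mul_nonneg (hP z.1).le (hout_nonneg z.2)) (hgg0 z.1 z.2))
        (hPW z.1).le)
      hm0 hs
    have e3 : (∑ z : (Fin 2 × Fin 2) × Fin 2, pairP p q z.1 * W z.1 z.2 *
        Real.logb 2 ((pairP p q z.1 * W z.1 z.2) / mmf p q a b D W z.1 z.2))
        = ∑ x, ∑ y, pairP p q x * W x y *
          Real.logb 2 ((pairP p q x * W x y) / mmf p q a b D W x y) := Fintype.sum_prod_type _
    rwa [e3] at hg
  have hT1 : ∑ x, ∑ y, pairP p q x * W x y * Real.logb 2 (PWf a b x)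
      = a * Real.logb 2 a + b * Real.logb 2 b := by
    have h1 : ∀ x : Fin 2 × Fin 2, ∑ y, pairP p q x * W x y * Real.logb 2 (PWf a b x)
        = pairP p q x * Real.logb 2 (PWf a b x) := by
      intro x
      rw [Fin.sum_univ_two]
      linear_combination (pairP p q x * Real.logb 2 (PWf a b x)) * hW01 x
    rw [Finset.sum_congr rfl fun x _ => h1 x]
    have c1 : ¬((0,0) : Fin 2 × Fin 2) = (1,1) := by decide
    have c2 : ¬((0,1) : Fin 2 × Fin 2) = (1,1) := by decide
    have c3 : ¬((1,0) : Fin 2 × Fin 2) = (1,1) := by decide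
    simp only [Fintype.sum_prod_type, Fin.sum_univ_two, PWf,
      if_neg c1, if_neg c2, if_neg c3, eq_self_iff_true, if_true]
    linear_combination (Real.logb 2 b) * hP3 + (Real.logb 2 a) * hP11
  have hT2 : ∑ x, ∑ y, pairP p q x * W x y * Real.logb 2 (ggf D x y)
      = (1 - expDist p q W) * Real.logb 2 (1-D) + expDist p q W * Real.logb 2 D := by
    have h1 : ∀ (x : Fin 2 × Fin 2) (y : Fin 2), pairP p q x * W x y * Real.logb 2 (ggf D x y)
        = (pairP p q x * W x y - pairP p q x * W x y * dH x y) * Real.logb 2 (1-D)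
          + (pairP p q x * W x y * dH x y) * Real.logb 2 D := by
      intro x y
      rw [hggval, hdH]
      by_cases hy : y = (if x = (1,1) then 1 else 0)
      · rw [if_pos hy, if_pos hy]; ring
      · rw [if_neg hy, if_neg hy]; ring
    rw [Finset.sum_congr rfl fun x _ => Finset.sum_congr rfl fun y _ => h1 x y]
    have h2 : ∑ x : Fin 2 × Fin 2, ∑ y : Fin 2,
        ((pairP p q x * W x y - pairP p q x * W x y * dH x y) * Real.logb 2 (1-D)
          + (pairP p q x * W x y * dH x y) * Real.logb 2 D)
        = (∑ x : Fin 2 × Fin 2, ∑ y : Fin 2,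
            (pairP p q x * W x y - pairP p q x * W x y * dH x y)) * Real.logb 2 (1-D)
          + (∑ x : Fin 2 × Fin 2, ∑ y : Fin 2,
            pairP p q x * W x y * dH x y) * Real.logb 2 D := by
      simp only [Finset.sum_add_distrib, ← Finset.sum_mul]
    rw [h2]
    have h3 : ∑ x : Fin 2 × Fin 2, ∑ y : Fin 2,
        (pairP p q x * W x y - pairP p q x * W x y * dH x y) = 1 - expDist p q W := by
      simp only [Finset.sum_sub_distrib]
      rw [hsum_f]
      rfl
    have h4 : ∑ x : Fin 2 × Fin 2, ∑ y : Fin 2, pairP p q x * W x y * dH x y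
        = expDist p q W := rfl
    rw [h3, h4]
  have hsplit : mutI p q W
      = (∑ x, ∑ y, pairP p q x * W x y *
          Real.logb 2 ((pairP p q x * W x y) / mmf p q a b D W x y))
        + ((1 - expDist p q W) * Real.logb 2 (1-D) + expDist p q W * Real.logb 2 D)
        - (a * Real.logb 2 a + b * Real.logb 2 b) := by
    rw [← hT1, ← hT2, mutI]
    rw [Finset.sum_congr rfl fun x _ => Finset.sum_congr rfl fun y _ => hterm x y]
    simp only [Finset.sum_add_distrib, Finset.sum_sub_distrib]
  have hmono : Real.logb 2 D ≤ Real.logb 2 (1-D) := by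
    rcases eq_or_lt_of_le hD0 with h0 | h0
    · rw [← h0]; simp
    · exact Real.logb_le_logb_of_le one_lt_two h0 (by linarith)
  have hfinal1 : (1-D) * Real.logb 2 (1-D) + D * Real.logb 2 D
      ≤ (1 - expDist p q W) * Real.logb 2 (1-D) + expDist p q W * Real.logb 2 D := by
    nlinarith [mul_nonneg (sub_nonneg.2 hE) (sub_nonneg.2 hmono)]
  rw [binEnt, binEnt]
  have h1b : 1 - b = a := by linarith
  rw [h1b, hsplit]
  linarith [hGibbs, hfinal1]

noncomputable def Wopt (u v : ℝ) : Fin 2 × Fin 2 → Fin 2 → ℝ := fun x y =>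
  if x = (1,1) then (if y = 1 then u else 1-u) else (if y = 1 then v else 1-v)

lemma achieve (p q : ℝ) (hp0 : 0 < p) (hp1 : p < 1) (hq0 : 0 < q) (hq1 : q < 1)
    (D : ℝ) (hD0 : 0 ≤ D) (hDb : D ≤ q*(1+p)/(p+q)) (hDa : D ≤ p*(1-q)/(p+q)) :
    ∃ W : Fin 2 × Fin 2 → Fin 2 → ℝ, (∀ x y, 0 ≤ W x y) ∧ (∀ x, ∑ y, W x y = 1) ∧
      expDist p q W ≤ D ∧ mutI p q W = binEnt (q*(1+p)/(p+q)) - binEnt D := by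
  have hpq : 0 < p + q := by linarith
  obtain ⟨a, ha_def⟩ : ∃ a : ℝ, p*(1-q)/(p+q) = a := ⟨_, rfl⟩
  obtain ⟨b, hb_def⟩ : ∃ b : ℝ, q*(1+p)/(p+q) = b := ⟨_, rfl⟩
  rw [ha_def] at hDa
  rw [hb_def] at hDb
  rw [hb_def]
  have ha : 0 < a := by rw [← ha_def]; refine div_pos (by nlinarith) hpq
  have hb : 0 < b := by rw [← hb_def]; refine div_pos (by nlinarith) hpq
  have hab : a + b = 1 := by rw [← ha_def, ← hb_def]; field_simp; ring
  have hD2 : 2 * D ≤ 1 := by linarith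
  have hD1 : (0:ℝ) < 1 - D := by linarith
  have hP := pairP_pos hp0 hp1 hq0 hq1 (p := p) (q := q)
  have hP11 : pairP p q (1,1) = a := by rw [pairP11 p q, ha_def]
  have hP3 : pairP p q (0,0) + pairP p q (0,1) + pairP p q (1,0) = b := by
    rw [pairP00, pairP01, pairP10, ← hb_def]; field_simp; ring
  obtain ⟨α, hα_def⟩ : ∃ α : ℝ, (a-D)/(1-2*D) = α := ⟨_, rfl⟩
  have hkey : α*(1-2*D) = a - D := by
    rcases eq_or_ne (1-2*D) 0 with h | h
    · rw [h, mul_zero]; linarith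
    · rw [← hα_def]; exact div_mul_cancel₀ _ h
  have hα0 : 0 ≤ α := by rw [← hα_def]; apply div_nonneg <;> linarith
  have hα1 : α ≤ 1 := by
    rcases eq_or_ne (1-2*D) 0 with h | h
    · rw [← hα_def, h, div_zero]; norm_num
    · have h' : 0 < 1-2*D := lt_of_le_of_ne (by linarith) (Ne.symm h)
      rw [← hα_def, div_le_one h']; linarith
  obtain ⟨u, hu_def⟩ : ∃ u : ℝ, α*(1-D)/a = u := ⟨_, rfl⟩
  obtain ⟨v, hv_def⟩ : ∃ v : ℝ, α*D/b = v := ⟨_, rfl⟩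
  have hau : a * u = α*(1-D) := by rw [← hu_def]; field_simp
  have hbv : b * v = α*D := by rw [← hv_def]; field_simp
  have hau' : a * (1-u) = (1-α)*D := by linear_combination -hau - hkey
  have hbv' : b * (1-v) = (1-α)*(1-D) := by linear_combination -hbv + hkey + hab
  have hu0 : 0 ≤ u := by
    rw [← hu_def]; exact div_nonneg (mul_nonneg hα0 (by linarith)) ha.le
  have hv0 : 0 ≤ v := by
    rw [← hv_def]; exact div_nonneg (mul_nonneg hα0 hD0) hb.le
  have hu1 : u ≤ 1 := by
    rw [← hu_def, div_le_one ha]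
    nlinarith [mul_nonneg (sub_nonneg.2 hα1) hD0]
  have hv1 : v ≤ 1 := by
    rw [← hv_def, div_le_one hb]
    nlinarith [mul_nonneg (sub_nonneg.2 hα1) hD0]
  have c1 : ¬((0,0) : Fin 2 × Fin 2) = (1,1) := by decide
  have c2 : ¬((0,1) : Fin 2 × Fin 2) = (1,1) := by decide
  have c3 : ¬((1,0) : Fin 2 × Fin 2) = (1,1) := by decide
  have c4 : ¬(0 : Fin 2) = 1 := by decide
  have c5 : ¬(1 : Fin 2) = 0 := by decide
  refine ⟨Wopt u v, ?_, ?_, ?_, ?_⟩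
  · intro x y
    simp only [Wopt]
    split <;> split <;> linarith
  · intro x
    rw [Fin.sum_univ_two]
    simp only [Wopt]
    split <;> simp
  · have hED : expDist p q (Wopt u v) = D := by
      simp only [expDist, dH, Wopt, Fintype.sum_prod_type, Fin.sum_univ_two,
        if_neg c1, if_neg c2, if_neg c3, if_neg c4, if_neg c5,
        eq_self_iff_true, if_true, mul_zero, mul_one, add_zero, zero_add]
      linear_combination v * hP3 + (1-u) * hP11 + hbv + hau'
    rw [hED]
  · have hout1 : outP p q (Wopt u v) 1 = α := by
      simp only [outP, Wopt, Fintype.sum_prod_type, Fin.sum_univ_two,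
        if_neg c1, if_neg c2, if_neg c3, eq_self_iff_true, if_true]
      linear_combination v * hP3 + u * hP11 + hbv + hau
    have hout0 : outP p q (Wopt u v) 0 = 1 - α := by
      simp only [outP, Wopt, Fintype.sum_prod_type, Fin.sum_univ_two,
        if_neg c1, if_neg c2, if_neg c3, if_neg c4, eq_self_iff_true, if_true]
      linear_combination (1-v) * hP3 + (1-u) * hP11 + hbv' + hau'
    have h1mv : 1-v = ((1-D)/b) * (1-α) := by
      rw [div_mul_eq_mul_div, eq_div_iff hb.ne']
      linear_combination hbv'
    have hv' : v = (D/b) * α := by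
      rw [div_mul_eq_mul_div, eq_div_iff hb.ne']
      linear_combination hbv
    have hu' : u = ((1-D)/a) * α := by
      rw [div_mul_eq_mul_div, eq_div_iff ha.ne']
      linear_combination hau
    have h1mu : 1-u = (D/a) * (1-α) := by
      rw [div_mul_eq_mul_div, eq_div_iff ha.ne']
      linear_combination hau'
    rw [mutI]
    simp only [Wopt, Fintype.sum_prod_type, Fin.sum_univ_two,
      if_neg c1, if_neg c2, if_neg c3, if_neg c4, eq_self_iff_true, if_true]
    rw [hout0, hout1]
    rw [term_eval (pairP p q (0,0)) (1-v) (1-α) ((1-D)/b) (hP _).ne' (by linarith) h1mv,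
      term_eval (pairP p q (0,0)) v α (D/b) (hP _).ne' hα0 hv',
      term_eval (pairP p q (0,1)) (1-v) (1-α) ((1-D)/b) (hP _).ne' (by linarith) h1mv,
      term_eval (pairP p q (0,1)) v α (D/b) (hP _).ne' hα0 hv',
      term_eval (pairP p q (1,0)) (1-v) (1-α) ((1-D)/b) (hP _).ne' (by linarith) h1mv,
      term_eval (pairP p q (1,0)) v α (D/b) (hP _).ne' hα0 hv',
      term_eval (pairP p q (1,1)) (1-u) (1-α) (D/a) (hP _).ne' (by linarith) h1mu,
      term_eval (pairP p q (1,1)) u α ((1-D)/a) (hP _).ne' hα0 hu']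
    have hvz : D = 0 → v = 0 := fun h => by rw [← hv_def, h, mul_zero, zero_div]
    have huz : D = 0 → 1 - u = 0 := fun h => by
      have h2 : a * (1-u) = 0 := by rw [hau', h, mul_zero]
      have := (mul_eq_zero.mp h2).resolve_left ha.ne'
      linarith
    rw [mul_logb_div (pairP p q (0,0) * (1-v)) (1-D) b hb.ne' (fun h => absurd h (by linarith)),
      mul_logb_div (pairP p q (0,0) * v) D b hb.ne' (fun h => by rw [hvz h, mul_zero]),
      mul_logb_div (pairP p q (0,1) * (1-v)) (1-D) b hb.ne' (fun h => absurd h (by linarith)),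
      mul_logb_div (pairP p q (0,1) * v) D b hb.ne' (fun h => by rw [hvz h, mul_zero]),
      mul_logb_div (pairP p q (1,0) * (1-v)) (1-D) b hb.ne' (fun h => absurd h (by linarith)),
      mul_logb_div (pairP p q (1,0) * v) D b hb.ne' (fun h => by rw [hvz h, mul_zero]),
      mul_logb_div (pairP p q (1,1) * (1-u)) D a ha.ne' (fun h => by rw [huz h, mul_zero]),
      mul_logb_div (pairP p q (1,1) * u) (1-D) a ha.ne' (fun h => absurd h (by linarith))]
    rw [binEnt, binEnt]
    have h1b : 1 - b = a := by linarith
    rw [h1b]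
    linear_combination
      ((1-v)*(Real.logb 2 (1-D) - Real.logb 2 b) + v*(Real.logb 2 D - Real.logb 2 b)) * hP3
      + (u*(Real.logb 2 (1-D) - Real.logb 2 a) + (1-u)*(Real.logb 2 D - Real.logb 2 a)) * hP11
      + (Real.logb 2 (1-D) - Real.logb 2 b) * hbv'
      + (Real.logb 2 D - Real.logb 2 b) * hbv
      + (Real.logb 2 D - Real.logb 2 a) * hau'
      + (Real.logb 2 (1-D) - Real.logb 2 a) * hau
      + (Real.logb 2 b - Real.logb 2 a) * hkey
      + Real.logb 2 b * hab

lemma pairP_sum (p q : ℝ) (hpq : 0 < p + q) : ∑ x, pairP p q x = 1 := by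
  rw [Fintype.sum_prod_type, Fin.sum_univ_two, Fin.sum_univ_two, Fin.sum_univ_two,
    pairP00, pairP01, pairP10, pairP11]
  field_simp
  ring

lemma mutI_nonneg (p q : ℝ) (hp0 : 0 < p) (hp1 : p < 1) (hq0 : 0 < q) (hq1 : q < 1)
    (W : Fin 2 × Fin 2 → Fin 2 → ℝ) (hW0 : ∀ x y, 0 ≤ W x y)
    (hW1 : ∀ x, ∑ y, W x y = 1) :
    0 ≤ mutI p q W := by
  have hpq : 0 < p + q := by linarith
  have hP := pairP_pos hp0 hp1 hq0 hq1 (p := p) (q := q)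
  have hout_nonneg : ∀ y, 0 ≤ outP p q W y := fun y =>
    Finset.sum_nonneg fun x _ => mul_nonneg (hP x).le (hW0 x y)
  have hout_zero : ∀ y, outP p q W y = 0 → ∀ x, W x y = 0 := by
    intro y hy x
    have h1 : ∀ x' ∈ Finset.univ, (0:ℝ) ≤ pairP p q x' * W x' y :=
      fun x' _ => mul_nonneg (hP x').le (hW0 x' y)
    have h2 := (Finset.sum_eq_zero_iff_of_nonneg h1).mp hy x (Finset.mem_univ x)
    rcases mul_eq_zero.mp h2 with h | h
    · exact absurd h (hP x).ne'
    · exact h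
  have hsum_f : ∑ x, ∑ y, pairP p q x * W x y = 1 := by
    have h1 : ∀ x : Fin 2 × Fin 2, ∑ y, pairP p q x * W x y = pairP p q x := fun x => by
      rw [← Finset.mul_sum, hW1 x, mul_one]
    rw [Finset.sum_congr rfl fun x _ => h1 x]
    exact pairP_sum p q hpq
  have hout01 : outP p q W 0 + outP p q W 1 = 1 := by
    rw [outP, outP, ← Finset.sum_add_distrib, ← hsum_f]
    refine Finset.sum_congr rfl fun x _ => ?_
    rw [Fin.sum_univ_two]
  have hsum_g : ∑ z : (Fin 2 × Fin 2) × Fin 2, pairP p q z.1 * outP p q W z.2 = 1 := by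
    rw [Fintype.sum_prod_type]
    have h1 : ∀ x : Fin 2 × Fin 2, ∑ y : Fin 2, pairP p q x * outP p q W y
        = pairP p q x := fun x => by
      rw [Fin.sum_univ_two, ← mul_add, hout01, mul_one]
    rw [Finset.sum_congr rfl fun x _ => h1 x]
    exact pairP_sum p q hpq
  have hg := gibbs (ι := (Fin 2 × Fin 2) × Fin 2)
    (fun z => pairP p q z.1 * W z.1 z.2)
    (fun z => pairP p q z.1 * outP p q W z.2)
    (fun z => mul_nonneg (hP _).le (hW0 _ _))
    (fun z => mul_nonneg (hP _).le (hout_nonneg _))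
    (fun z hz => by
      have h' := (mul_eq_zero.mp hz).resolve_left (hP z.1).ne'
      show pairP p q z.1 * W z.1 z.2 = 0
      rw [hout_zero z.2 h' z.1, mul_zero])
    (by
      rw [hsum_g,
        show (∑ z : (Fin 2 × Fin 2) × Fin 2, pairP p q z.1 * W z.1 z.2)
          = ∑ x, ∑ y, pairP p q x * W x y from Fintype.sum_prod_type _, hsum_f])
  have e3 : (∑ z : (Fin 2 × Fin 2) × Fin 2, pairP p q z.1 * W z.1 z.2 *
      Real.logb 2 ((pairP p q z.1 * W z.1 z.2) / (pairP p q z.1 * outP p q W z.2)))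
      = ∑ x, ∑ y, pairP p q x * W x y *
        Real.logb 2 ((pairP p q x * W x y) / (pairP p q x * outP p q W y)) :=
    Fintype.sum_prod_type _
  rw [mutI]
  rwa [e3] at hg

noncomputable def Wdet (y0 : Fin 2) : Fin 2 × Fin 2 → Fin 2 → ℝ := fun _ y =>
  if y = y0 then 1 else 0

lemma Wdet_nonneg (y0 : Fin 2) : ∀ (x : Fin 2 × Fin 2) (y : Fin 2), 0 ≤ Wdet y0 x y := by
  intro x y
  simp only [Wdet]
  split <;> norm_num

lemma Wdet_rows (y0 : Fin 2) : ∀ x : Fin 2 × Fin 2, ∑ y, Wdet y0 x y = 1 := by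
  intro x
  fin_cases y0 <;> simp [Wdet, Fin.sum_univ_two]

lemma Wdet_out (p q : ℝ) (hpq : 0 < p + q) (y0 y : Fin 2) :
    outP p q (Wdet y0) y = if y = y0 then 1 else 0 := by
  rw [outP]
  by_cases hy : y = y0
  · rw [if_pos hy]
    have h1 : ∀ x : Fin 2 × Fin 2, pairP p q x * Wdet y0 x y = pairP p q x := fun x => by
      have : Wdet y0 x y = 1 := by rw [show Wdet y0 x y = if y = y0 then (1:ℝ) else 0 from rfl, if_pos hy]
      rw [this, mul_one]
    rw [Finset.sum_congr rfl fun x _ => h1 x]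
    exact pairP_sum p q hpq
  · rw [if_neg hy]
    refine Finset.sum_eq_zero fun x _ => ?_
    have : Wdet y0 x y = 0 := by
      rw [show Wdet y0 x y = if y = y0 then (1:ℝ) else 0 from rfl, if_neg hy]
    rw [this, mul_zero]

lemma Wdet_mutI (p q : ℝ) (hp0 : 0 < p) (hp1 : p < 1) (hq0 : 0 < q) (hq1 : q < 1)
    (y0 : Fin 2) : mutI p q (Wdet y0) = 0 := by
  have hpq : 0 < p + q := by linarith
  have hP := pairP_pos hp0 hp1 hq0 hq1 (p := p) (q := q)
  rw [mutI]
  refine Finset.sum_eq_zero fun x _ => Finset.sum_eq_zero fun y _ => ?_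
  rw [Wdet_out p q hpq y0 y]
  by_cases hy : y = y0
  · rw [show Wdet y0 x y = if y = y0 then (1:ℝ) else 0 from rfl, if_pos hy,
      mul_one, div_self (hP x).ne', Real.logb_one, mul_zero]
  · rw [show Wdet y0 x y = if y = y0 then (1:ℝ) else 0 from rfl, if_neg hy,
      mul_zero, zero_mul]

lemma Wdet_exp0 (p q : ℝ) (hpq : 0 < p + q) : expDist p q (Wdet 0) = p*(1-q)/(p+q) := by
  have c1 : ¬((0,0) : Fin 2 × Fin 2) = (1,1) := by decide
  have c2 : ¬((0,1) : Fin 2 × Fin 2) = (1,1) := by decide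
  have c3 : ¬((1,0) : Fin 2 × Fin 2) = (1,1) := by decide
  have c4 : ¬(0 : Fin 2) = 1 := by decide
  have c5 : ¬(1 : Fin 2) = 0 := by decide
  simp only [expDist, Wdet, dH, Fintype.sum_prod_type, Fin.sum_univ_two,
    if_neg c1, if_neg c2, if_neg c3, if_neg c4, if_neg c5,
    eq_self_iff_true, if_true, mul_zero, mul_one, zero_add, add_zero, zero_mul]
  exact pairP11 p q

lemma Wdet_exp1 (p q : ℝ) (hpq : 0 < p + q) : expDist p q (Wdet 1) = q*(1+p)/(p+q) := by
  have c1 : ¬((0,0) : Fin 2 × Fin 2) = (1,1) := by decide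
  have c2 : ¬((0,1) : Fin 2 × Fin 2) = (1,1) := by decide
  have c3 : ¬((1,0) : Fin 2 × Fin 2) = (1,1) := by decide
  have c4 : ¬(0 : Fin 2) = 1 := by decide
  have c5 : ¬(1 : Fin 2) = 0 := by decide
  simp only [expDist, Wdet, dH, Fintype.sum_prod_type, Fin.sum_univ_two,
    if_neg c1, if_neg c2, if_neg c3, if_neg c4, if_neg c5,
    eq_self_iff_true, if_true, mul_zero, mul_one, zero_add, add_zero, zero_mul]
  rw [pairP00, pairP01, pairP10]
  field_simp
  ring


/-- The single-letter causal rate distortion function of the stationary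
binary Markov pair source with Hamming-type distortion toward the indicator of two
consecutive ones equals `H_b(q(1+p)/(p+q)) − H_b(D)` for `0 ≤ D ≤ D_max` and `0` for
`D > D_max`, where `D_max = min(q(1+p)/(p+q), p(1−q)/(p+q))`; moreover the minimum is
attained. -/
theorem stmt15 (p q : ℝ) (hp0 : 0 < p) (hp1 : p < 1) (hq0 : 0 < q) (hq1 : q < 1)
    (D : ℝ) :
    -- for `0 ≤ D ≤ D_max` : `R^c(D) = H_b(q(1+p)/(p+q)) − H_b(D)`
    (0 ≤ D → D ≤ min (q * (1 + p) / (p + q)) (p * (1 - q) / (p + q)) →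
      IsLeast {r : ℝ | ∃ W : Fin 2 × Fin 2 → Fin 2 → ℝ,
          (∀ x y, 0 ≤ W x y) ∧ (∀ x, ∑ y, W x y = 1) ∧
          expDist p q W ≤ D ∧ r = mutI p q W}
        (binEnt (q * (1 + p) / (p + q)) - binEnt D)) ∧
    -- for `D > D_max` : `R^c(D) = 0`
    (D > min (q * (1 + p) / (p + q)) (p * (1 - q) / (p + q)) →
      IsLeast {r : ℝ | ∃ W : Fin 2 × Fin 2 → Fin 2 → ℝ,
          (∀ x y, 0 ≤ W x y) ∧ (∀ x, ∑ y, W x y = 1) ∧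
          expDist p q W ≤ D ∧ r = mutI p q W}
        0) := by
  have hpq : 0 < p + q := by linarith
  constructor
  · intro hD0 hDmin
    rw [le_min_iff] at hDmin
    obtain ⟨hDb, hDa⟩ := hDmin
    constructor
    · obtain ⟨W, h0, h1, hE, hI⟩ := achieve p q hp0 hp1 hq0 hq1 D hD0 hDb hDa
      exact ⟨W, h0, h1, hE, hI.symm⟩
    · rintro r ⟨W, h0, h1, hE, rfl⟩
      exact converse p q hp0 hp1 hq0 hq1 D hD0 hDb hDa W h0 h1 hE
  · intro hD
    constructor
    · rcases le_total (p * (1 - q) / (p + q)) (q * (1 + p) / (p + q)) with h | h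
      · refine ⟨Wdet 0, Wdet_nonneg 0, Wdet_rows 0, ?_, (Wdet_mutI p q hp0 hp1 hq0 hq1 0).symm⟩
        rw [Wdet_exp0 p q hpq]
        rw [min_eq_right h] at hD
        linarith
      · refine ⟨Wdet 1, Wdet_nonneg 1, Wdet_rows 1, ?_, (Wdet_mutI p q hp0 hp1 hq0 hq1 1).symm⟩
        rw [Wdet_exp1 p q hpq]
        rw [min_eq_left h] at hD
        linarith
    · rintro r ⟨W, h0, h1, hE, rfl⟩
      exact mutI_nonneg p q hp0 hp1 hq0 hq1 W h0 h1
end
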